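/- arXiv:2107.02019 — 8 statements merged into one kernel-verified Lean document; each statement's English description precedes it below -/
import Mathlib

section
/- Let P be an n×n real matrix (n ≥ 2) with nonnegative entries that is column stochastic (every column sums to 1) and primitive (there exists k ≥ 1 such that every entry of P^k is strictly positive). Define the iterations y^{t+1} = P y^t with arbitrary initial vector y^0 ∈ ℝ^n, and x^{t+1} = P x^t with initial vector x^0 equal to the all-ones vector. Then for every index j ∈ {1,…,n}, the ratio μ_j^t = y_j^t / x_j^t converges, as t → ∞, to (Σ_{i=1}^n y_i^0)/n, i.e., each node asymptotically obtains the exact average of the initial values. -/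
open Filter Matrix

section aux
variable {n : ℕ} {P : Matrix (Fin n) (Fin n) ℝ}

lemma rc_pow_nonneg (hP : ∀ i j, 0 ≤ P i j) : ∀ m i j, 0 ≤ (P ^ m) i j := by
  intro m
  induction m with
  | zero =>
    intro i j
    by_cases h : i = j <;> simp [Matrix.one_apply, h]
  | succ m ih =>
    intro i j
    rw [pow_succ, Matrix.mul_apply]
    exact Finset.sum_nonneg fun l _ => mul_nonneg (ih i l) (hP l j)

lemma rc_pow_col (hcol : ∀ j, ∑ i, P i j = 1) : ∀ m j, ∑ i, (P ^ m) i j = 1 := by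
  intro m
  induction m with
  | zero => intro j; simp [Matrix.one_apply]
  | succ m ih =>
    intro j
    simp only [pow_succ, Matrix.mul_apply]
    rw [Finset.sum_comm]
    simp only [← Finset.sum_mul, ih, one_mul, hcol]

lemma rc_entry_le_one (hP : ∀ i j, 0 ≤ P i j) (hcol : ∀ j, ∑ i, P i j = 1)
    (m : ℕ) (i j : Fin n) : (P ^ m) i j ≤ 1 := by
  have h := Finset.single_le_sum (f := fun i => (P ^ m) i j)
    (fun l _ => rc_pow_nonneg hP m l j) (Finset.mem_univ i)
  rwa [rc_pow_col hcol m j] at h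

lemma rc_pos_mul {A B : Matrix (Fin n) (Fin n) ℝ}
    (hA : ∀ i j, 0 < A i j) (hB : ∀ i j, 0 ≤ B i j) (hBcol : ∀ j, ∑ i, B i j = 1)
    (i j : Fin n) : 0 < (A * B) i j := by
  rw [Matrix.mul_apply]
  have hex : ∃ l ∈ Finset.univ, 0 < A i l * B l j := by
    by_contra h
    push_neg at h
    have hB0 : ∀ l, B l j = 0 := by
      intro l
      refine le_antisymm ?_ (hB l j)
      by_contra hpos
      push_neg at hpos
      nlinarith [h l (Finset.mem_univ l), mul_pos (hA i l) hpos]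
    have h10 : (1 : ℝ) = 0 := by
      rw [← hBcol j]
      exact Finset.sum_eq_zero fun l _ => hB0 l
    exact one_ne_zero h10
  exact Finset.sum_pos' (fun l _ => mul_nonneg (hA i l).le (hB l j)) hex

lemma rc_pow_k_pos (hP : ∀ i j, 0 ≤ P i j) (hcol : ∀ j, ∑ i, P i j = 1)
    {k : ℕ} (hk : ∀ i j, 0 < (P ^ k) i j) :
    ∀ m, ∀ i j, 0 < (P ^ (k * (m + 1))) i j := by
  intro m
  induction m with
  | zero => simpa using hk
  | succ m ih =>
    intro i j
    have : k * (m + 1 + 1) = k * (m + 1) + k := by ring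
    rw [this, pow_add]
    exact rc_pos_mul ih (rc_pow_nonneg hP k) (rc_pow_col hcol k) i j

lemma rc_rowsum_pos (hP : ∀ i j, 0 ≤ P i j) (hcol : ∀ j, ∑ i, P i j = 1)
    {k : ℕ} (hk1 : 1 ≤ k) (hk : ∀ i j, 0 < (P ^ k) i j) :
    ∀ t j, 0 < ∑ i, (P ^ t) j i := by
  intro t j
  have hle : t + 1 ≤ k * (t + 1) := Nat.le_mul_of_pos_left _ hk1
  obtain ⟨s, hs⟩ : ∃ s, k * (t + 1) = t + s := ⟨k * (t + 1) - t, by omega⟩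
  have hpos : 0 < (P ^ (t + s)) j j := by rw [← hs]; exact rc_pow_k_pos hP hcol hk t j j
  rw [pow_add, Matrix.mul_apply] at hpos
  refine lt_of_lt_of_le hpos (Finset.sum_le_sum fun l _ => ?_)
  calc (P ^ t) j l * (P ^ s) l j ≤ (P ^ t) j l * 1 :=
        mul_le_mul_of_nonneg_left (rc_entry_le_one hP hcol s l j) (rc_pow_nonneg hP t j l)
    _ = (P ^ t) j l := mul_one _

end aux

/-- Ratio consensus, asymptotic average.
If `P` is an `n × n` nonnegative, column-stochastic, primitive matrix (`n ≥ 2`),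
`y t = P^t y⁰` with arbitrary `y⁰`, and `x t = P^t 𝟙`, then for every index `j`
the ratio `y_j^t / x_j^t` converges to `(∑ i, y⁰ i) / n`. -/
theorem ratio_consensus_asymptotic_average
    (n : ℕ) (hn : 2 ≤ n) (P : Matrix (Fin n) (Fin n) ℝ)
    (hnonneg : ∀ i j, 0 ≤ P i j)
    (hcol : ∀ j : Fin n, ∑ i : Fin n, P i j = 1)
    (hprim : ∃ k : ℕ, 1 ≤ k ∧ ∀ i j, 0 < (P ^ k) i j)
    (y0 : Fin n → ℝ) (j : Fin n) :
    Tendsto (fun t : ℕ => ((P ^ t) *ᵥ y0) j / ((P ^ t) *ᵥ (fun _ => (1 : ℝ))) j)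
      atTop (nhds ((∑ i : Fin n, y0 i) / n)) := by
  obtain ⟨k, hk1, hkpos⟩ := hprim
  have hne : (Finset.univ : Finset (Fin n)).Nonempty := ⟨⟨0, by omega⟩, Finset.mem_univ _⟩
  have hn0 : (0 : ℝ) < n := by
    have : 0 < n := by omega
    exact_mod_cast this
  set A : ℝ := (∑ i : Fin n, y0 i) / n with hA
  set xv : ℕ → Fin n → ℝ := fun t => (P ^ t) *ᵥ (fun _ => (1 : ℝ)) with hxv
  set yv : ℕ → Fin n → ℝ := fun t => (P ^ t) *ᵥ y0 with hyv
  set Mf : ℕ → ℝ := fun t => Finset.univ.sup' hne (fun i => yv t i / xv t i) with hMf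
  set mf : ℕ → ℝ := fun t => Finset.univ.inf' hne (fun i => yv t i / xv t i) with hmf
  -- x positivity
  have hxpos : ∀ t i, 0 < xv t i := by
    intro t i
    have : xv t i = ∑ l, (P ^ t) i l := by
      simp [hxv, Matrix.mulVec, dotProduct]
    rw [this]
    exact rc_rowsum_pos hnonneg hcol hk1 hkpos t i
  -- sums
  have hsum : ∀ (v : Fin n → ℝ) t, ∑ i, ((P ^ t) *ᵥ v) i = ∑ i, v i := by
    intro v t
    simp only [Matrix.mulVec, dotProduct]
    rw [Finset.sum_comm]
    simp only [← Finset.sum_mul, rc_pow_col hcol, one_mul]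
  have hsumx : ∀ t, ∑ i, xv t i = n := by
    intro t; rw [hxv]; simp [hsum]
  have hsumy : ∀ t, ∑ i, yv t i = ∑ i, y0 i := fun t => hsum y0 t
  have hxlen : ∀ t i, xv t i ≤ n := by
    intro t i
    have h := Finset.single_le_sum (f := fun l => xv t l) (fun l _ => (hxpos t l).le)
      (Finset.mem_univ i)
    rw [hsumx t] at h; exact h
  -- recursion
  have hrec : ∀ t s (v : Fin n → ℝ) i, ((P ^ (t + s)) *ᵥ v) i = ∑ l, (P ^ s) i l * ((P ^ t) *ᵥ v) l := by
    intro t s v i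
    rw [add_comm, pow_add, ← Matrix.mulVec_mulVec]
    simp [Matrix.mulVec, dotProduct]
  -- basic bounds
  have hmle : ∀ t i, mf t * xv t i ≤ yv t i := by
    intro t i
    have h : mf t ≤ yv t i / xv t i := Finset.inf'_le _ (Finset.mem_univ i)
    exact (le_div_iff₀ (hxpos t i)).1 h
  have hMle : ∀ t i, yv t i ≤ Mf t * xv t i := by
    intro t i
    have h : yv t i / xv t i ≤ Mf t :=
      Finset.le_sup' (f := fun l => yv t l / xv t l) (Finset.mem_univ i)
    exact (div_le_iff₀ (hxpos t i)).1 h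
  have hxrec : ∀ t s i, xv (t + s) i = ∑ l, (P ^ s) i l * xv t l := fun t s i => hrec t s _ i
  have hyrec : ∀ t s i, yv (t + s) i = ∑ l, (P ^ s) i l * yv t l := fun t s i => hrec t s _ i
  have hup : ∀ t s i, yv (t + s) i ≤ Mf t * xv (t + s) i := by
    intro t s i
    rw [hxrec, hyrec, Finset.mul_sum]
    refine Finset.sum_le_sum fun l _ => ?_
    rw [mul_left_comm]
    exact mul_le_mul_of_nonneg_left (hMle t l) (rc_pow_nonneg hnonneg s i l)
  have hlo : ∀ t s i, mf t * xv (t + s) i ≤ yv (t + s) i := by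
    intro t s i
    rw [hxrec, hyrec, Finset.mul_sum]
    refine Finset.sum_le_sum fun l _ => ?_
    rw [mul_left_comm]
    exact mul_le_mul_of_nonneg_left (hmle t l) (rc_pow_nonneg hnonneg s i l)
  have hMmono : ∀ t s, Mf (t + s) ≤ Mf t := by
    intro t s
    refine Finset.sup'_le _ _ fun i _ => ?_
    exact (div_le_iff₀ (hxpos _ i)).2 (hup t s i)
  have hmmono : ∀ t s, mf t ≤ mf (t + s) := by
    intro t s
    refine Finset.le_inf' _ _ fun i _ => ?_
    exact (le_div_iff₀ (hxpos _ i)).2 (hlo t s i)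
  -- A between m and M
  have hmA : ∀ t, mf t ≤ A := by
    intro t
    rw [hA, le_div_iff₀ hn0]
    calc mf t * n = mf t * ∑ i, xv t i := by rw [hsumx]
      _ = ∑ i, mf t * xv t i := by rw [Finset.mul_sum]
      _ ≤ ∑ i, yv t i := Finset.sum_le_sum fun i _ => hmle t i
      _ = ∑ i, y0 i := hsumy t
  have hAM : ∀ t, A ≤ Mf t := by
    intro t
    rw [hA, div_le_iff₀ hn0]
    calc ∑ i, y0 i = ∑ i, yv t i := (hsumy t).symm
      _ ≤ ∑ i, Mf t * xv t i := Finset.sum_le_sum fun i _ => hMle t i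
      _ = Mf t * ∑ i, xv t i := by rw [Finset.mul_sum]
      _ = Mf t * n := by rw [hsumx]
  have hDnn : ∀ t, 0 ≤ Mf t - mf t := fun t => by linarith [hmA t, hAM t]
  -- epsilon
  set ε : ℝ := Finset.univ.inf' hne fun i => Finset.univ.inf' hne fun l => (P ^ k) i l with hε
  have hεpos : 0 < ε := by
    rw [hε, Finset.lt_inf'_iff]
    intro i _
    rw [Finset.lt_inf'_iff]
    intro l _
    exact hkpos i l
  have hεle : ∀ i l, ε ≤ (P ^ k) i l := by
    intro i l
    calc ε ≤ Finset.univ.inf' hne fun l => (P ^ k) i l := Finset.inf'_le _ (Finset.mem_univ i)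
      _ ≤ (P ^ k) i l := Finset.inf'_le _ (Finset.mem_univ l)
  have hεle1 : ε ≤ 1 := le_trans (hεle ⟨0, by omega⟩ ⟨0, by omega⟩)
    (rc_entry_le_one hnonneg hcol k _ _)
  have hεn1 : ε * n ≤ 1 := by
    have h := Finset.card_nsmul_le_sum Finset.univ (fun i => (P ^ k) i ⟨0, by omega⟩) ε
      (fun i _ => hεle i _)
    rw [rc_pow_col hcol] at h
    simpa [mul_comm, Finset.card_univ] using h
  -- lower bound on x at multiples of k
  have hxlow : ∀ m i, ε * n ≤ xv (k * m) i := by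
    intro m i
    cases m with
    | zero =>
      have : xv 0 i = 1 := by simp [hxv]
      simpa [this] using hεn1
    | succ m =>
      have hkm : k * (m + 1) = k * m + k := by ring
      rw [hkm, hxrec]
      calc ε * n = ε * ∑ l, xv (k * m) l := by rw [hsumx]
        _ = ∑ l, ε * xv (k * m) l := by rw [Finset.mul_sum]
        _ ≤ ∑ l, (P ^ k) i l * xv (k * m) l :=
            Finset.sum_le_sum fun l _ => mul_le_mul_of_nonneg_right (hεle i l) (hxpos _ l).le
  -- contraction step
  have hstep : ∀ m, Mf (k * m + k) - mf (k * m + k) ≤ (1 - ε * ε) * (Mf (k * m) - mf (k * m)) := by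
    intro m
    set t := k * m with ht
    obtain ⟨i0, _, hi0⟩ := Finset.exists_mem_eq_sup' hne (fun i => yv t i / xv t i)
    have hyMi0 : yv t i0 = Mf t * xv t i0 := by
      have h' : yv t i0 / xv t i0 = Mf t := hi0.symm
      rwa [div_eq_iff (hxpos t i0).ne'] at h'
    have claim : ∀ i, (mf t + ε * ε * (Mf t - mf t)) * xv (t + k) i ≤ yv (t + k) i := by
      intro i
      have hw : ε * (ε * ↑n) ≤ (P ^ k) i i0 * xv t i0 :=
        mul_le_mul (hεle i i0) (hxlow m i0) (mul_nonneg hεpos.le (Nat.cast_nonneg n))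
          (rc_pow_nonneg hnonneg k i i0)
      have h1 : ε * (ε * n) * (Mf t - mf t) ≤ (P ^ k) i i0 * (yv t i0 - mf t * xv t i0) := by
        rw [hyMi0]
        calc ε * (ε * ↑n) * (Mf t - mf t)
            ≤ ((P ^ k) i i0 * xv t i0) * (Mf t - mf t) :=
              mul_le_mul_of_nonneg_right hw (hDnn t)
          _ = (P ^ k) i i0 * (Mf t * xv t i0 - mf t * xv t i0) := by ring
      have h2 : (P ^ k) i i0 * (yv t i0 - mf t * xv t i0) ≤
          ∑ l, (P ^ k) i l * (yv t l - mf t * xv t l) := by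
        refine Finset.single_le_sum (f := fun l => (P ^ k) i l * (yv t l - mf t * xv t l))
          (fun l _ => mul_nonneg (rc_pow_nonneg hnonneg k i l) (by linarith [hmle t l]))
          (Finset.mem_univ i0)
      have h3 : ∑ l, (P ^ k) i l * (yv t l - mf t * xv t l)
          = yv (t + k) i - mf t * xv (t + k) i := by
        rw [hyrec, hxrec, Finset.mul_sum, ← Finset.sum_sub_distrib]
        congr 1
        ext l
        ring
      have h4 : ε * ε * (Mf t - mf t) * xv (t + k) i ≤ ε * (ε * n) * (Mf t - mf t) := by
        calc ε * ε * (Mf t - mf t) * xv (t + k) i ≤ ε * ε * (Mf t - mf t) * n :=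
              mul_le_mul_of_nonneg_left (hxlen _ i) (mul_nonneg (mul_nonneg hεpos.le hεpos.le) (hDnn t))
          _ = ε * (ε * n) * (Mf t - mf t) := by ring
      have := h4.trans (h1.trans (h2.trans_eq h3))
      nlinarith [this]
    have hmlow : mf t + ε * ε * (Mf t - mf t) ≤ mf (t + k) := by
      refine Finset.le_inf' _ _ fun i _ => ?_
      exact (le_div_iff₀ (hxpos _ i)).2 (claim i)
    have hMhigh : Mf (t + k) ≤ Mf t := hMmono t k
    linarith [hmlow, hMhigh]
  set c : ℝ := 1 - ε * ε with hc
  have hc0 : 0 ≤ c := by nlinarith [hεle1, hεpos]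
  have hc1 : c < 1 := by nlinarith [hεpos]
  have hgeom : ∀ m, Mf (k * m) - mf (k * m) ≤ c ^ m * (Mf 0 - mf 0) := by
    intro m
    induction m with
    | zero => simp
    | succ m ih =>
      have h1 : k * (m + 1) = k * m + k := by ring
      rw [h1]
      calc Mf (k * m + k) - mf (k * m + k) ≤ c * (Mf (k * m) - mf (k * m)) := hstep m
        _ ≤ c * (c ^ m * (Mf 0 - mf 0)) := mul_le_mul_of_nonneg_left ih hc0
        _ = c ^ (m + 1) * (Mf 0 - mf 0) := by ring
  -- final bound
  have hbound : ∀ t i, |yv t i / xv t i - A| ≤ c ^ (t / k) * (Mf 0 - mf 0) := by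
    intro t i
    have hmod : k * (t / k) + t % k = t := Nat.div_add_mod t k
    have hM : Mf t ≤ Mf (k * (t / k)) := by
      conv_lhs => rw [← hmod]
      exact hMmono _ _
    have hm : mf (k * (t / k)) ≤ mf t := by
      conv_rhs => rw [← hmod]
      exact hmmono _ _
    have hD : Mf t - mf t ≤ c ^ (t / k) * (Mf 0 - mf 0) := by
      calc Mf t - mf t ≤ Mf (k * (t / k)) - mf (k * (t / k)) := by linarith
        _ ≤ _ := hgeom _
    have h1 : mf t ≤ yv t i / xv t i := Finset.inf'_le _ (Finset.mem_univ i)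
    have h2 : yv t i / xv t i ≤ Mf t :=
      Finset.le_sup' (f := fun l => yv t l / xv t l) (Finset.mem_univ i)
    rw [abs_le]
    constructor <;> [linarith [hAM t]; linarith [hmA t]]
  -- conclude
  rw [tendsto_iff_dist_tendsto_zero]
  have hdiv : Tendsto (fun t : ℕ => t / k) atTop atTop :=
    le_of_eq (Filter.map_div_atTop_eq_nat k hk1)
  have hg : Tendsto (fun t : ℕ => c ^ (t / k) * (Mf 0 - mf 0)) atTop (nhds 0) := by
    have h := ((tendsto_pow_atTop_nhds_zero_of_lt_one hc0 hc1).comp hdiv).mul_const (Mf 0 - mf 0)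
    simpa using h
  refine squeeze_zero (fun t => dist_nonneg) (fun t => ?_) hg
  rw [Real.dist_eq]
  exact hbound t j
end

section
/- Let P be an n×n real matrix, w^0 ∈ ℝ^n, and w^t = P^t w^0. Suppose q(z) = (z − 1)·p(z) is a monic real polynomial with e_jᵀ q(P) = 0, where p(z) = Σ_{i=0}^{M} β_i z^i and every complex root of p has modulus strictly less than 1. Then Σ_{i=0}^{M} β_i ≠ 0, the scalar sequence (w_j^t)_{t≥0} converges as t → ∞, and its limit equals (Σ_{i=0}^{M} β_i w_j^i) / (Σ_{i=0}^{M} β_i); that is, the asymptotic value at node j can be computed exactly from the first M+1 iterates w_j^0, …, w_j^M. -/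
open Filter Matrix Finset Polynomial

lemma decay_aux (r : ℝ) (hr : 0 < r) :
    ∀ (d : ℕ) (p : Polynomial ℂ), p.natDegree = d → p.Monic →
    (∀ z ∈ p.roots, ‖z‖ < r) →
    ∀ (v : ℕ → ℂ), (∀ t, ∑ i ∈ range (p.natDegree + 1), p.coeff i * v (t + i) = 0) →
    ∃ C, 0 ≤ C ∧ ∀ t, ‖v t‖ ≤ C * r ^ t := by
  intro d
  induction d with
  | zero =>
      intro p hd hm _ v hv
      refine ⟨0, le_refl _, fun t => ?_⟩
      have hp1 : p = 1 := hm.natDegree_eq_zero.mp hd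
      have := hv t
      simp [hp1] at this
      simp [this]
  | succ d ih =>
      intro p hd hm hroots v hv
      have hp0 : p ≠ 0 := hm.ne_zero
      obtain ⟨lam, hlam⟩ := Complex.exists_root (f := p) (by
        rw [degree_eq_natDegree hp0, hd]; exact_mod_cast Nat.succ_pos d)
      obtain ⟨s, hs⟩ := (dvd_iff_isRoot.mpr hlam)
      have hXm : (X - C lam).Monic := monic_X_sub_C lam
      have hsm : s.Monic := hXm.of_mul_monic_left (hs ▸ hm)
      have hs0 : s ≠ 0 := hsm.ne_zero
      have hsd : s.natDegree = d := by
        have := natDegree_mul (hXm.ne_zero) hs0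
        rw [← hs, hd, natDegree_X_sub_C] at this
        omega
      have hlamr : ‖lam‖ < r :=
        hroots lam ((mem_roots hp0).mpr hlam)
      have hsroots : ∀ z ∈ s.roots, ‖z‖ < r := by
        intro z hz
        refine hroots z ?_
        rw [hs, roots_mul (by rw [← hs]; exact hp0)]
        exact Multiset.mem_add.mpr (Or.inr hz)
      -- coefficients of p
      have hcoeff0 : p.coeff 0 = -(lam * s.coeff 0) := by
        rw [hs]; simp [mul_coeff_zero, coeff_X_zero]; try ring
      have hcoeffS : ∀ i : ℕ, p.coeff (i + 1) = s.coeff i - lam * s.coeff (i + 1) := by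
        intro i
        rw [hs, sub_mul, coeff_sub, coeff_X_mul]
        simp [coeff_C_mul]
      set v' : ℕ → ℂ := fun t => v (t + 1) - lam * v t with hv'def
      have hv' : ∀ t, ∑ i ∈ range (s.natDegree + 1), s.coeff i * v' (t + i) = 0 := by
        intro t
        have h0 := hv t
        rw [hd] at h0
        rw [hsd]
        calc ∑ i ∈ range (d + 1), s.coeff i * v' (t + i)
            = ∑ i ∈ range (d + 1), (s.coeff i * v (t + i + 1) - lam * (s.coeff i * v (t + i))) := by
              apply Finset.sum_congr rfl; intro i _; simp only [hv'def]; ring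
          _ = ∑ i ∈ range (d + 1), s.coeff i * v (t + i + 1)
              - lam * ∑ i ∈ range (d + 1), s.coeff i * v (t + i) := by
              rw [Finset.sum_sub_distrib, Finset.mul_sum]
          _ = ∑ i ∈ range (d + 2), p.coeff i * v (t + i) := by
              rw [Finset.sum_range_succ' (fun i => p.coeff i * v (t + i)) (d+1)]
              have e1 : ∑ i ∈ range (d + 1), p.coeff (i + 1) * v (t + (i + 1))
                  = ∑ i ∈ range (d + 1), (s.coeff i * v (t + i + 1)
                      - lam * (s.coeff (i+1) * v (t + i + 1))) := by
                apply Finset.sum_congr rfl; intro i _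
                rw [hcoeffS i]; ring_nf
              rw [e1, Finset.sum_sub_distrib, hcoeff0]
              have e2 : ∑ i ∈ range (d + 1), lam * (s.coeff (i+1) * v (t + i + 1))
                    + lam * (s.coeff 0 * v t)
                  = lam * ∑ i ∈ range (d + 1), s.coeff i * v (t + i) := by
                rw [Finset.mul_sum]
                rw [Finset.sum_range_succ' (fun i => lam * (s.coeff i * v (t + i))) d]
                have : ∑ i ∈ range (d+1), lam * (s.coeff (i+1) * v (t + i + 1))
                    = ∑ i ∈ range d, lam * (s.coeff (i+1) * v (t + (i + 1))) := by
                  rw [Finset.sum_range_succ]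
                  have : s.coeff (d + 1) = 0 :=
                    coeff_eq_zero_of_natDegree_lt (by omega)
                  simp [this]
                  apply Finset.sum_congr rfl; intro i _; ring_nf
                rw [this]
                simp
              rw [← e2, neg_mul, mul_assoc]
              abel
          _ = 0 := h0
      obtain ⟨C, hC0, hC⟩ := ih s hsd hsm hsroots v' hv'
      set C' : ℝ := max (‖v 0‖) (C / (r - ‖lam‖)) with hC'
      have hrl : 0 < r - ‖lam‖ := by linarith
      have hC'0 : 0 ≤ C' := le_trans (norm_nonneg _) (le_max_left _ _)
      have hCC' : C ≤ C' * (r - ‖lam‖) := by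
        have : C / (r - ‖lam‖) ≤ C' := le_max_right _ _
        calc C = (C / (r - ‖lam‖)) * (r - ‖lam‖) := by
                field_simp
          _ ≤ C' * (r - ‖lam‖) := by
                exact mul_le_mul_of_nonneg_right this (le_of_lt hrl)
      refine ⟨C', hC'0, fun t => ?_⟩
      induction t with
      | zero =>
          rw [pow_zero, mul_one, hC']
          exact le_max_left _ _
      | succ t iht =>
          have hvt : v (t + 1) = v' t + lam * v t := by simp [hv'def]
          calc ‖v (t + 1)‖ ≤ ‖v' t‖ + ‖lam * v t‖ := by
                rw [hvt]; exact norm_add_le _ _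
            _ ≤ C * r ^ t + ‖lam‖ * (C' * r ^ t) := by
                rw [norm_mul]
                refine add_le_add (hC t) (mul_le_mul_of_nonneg_left iht (norm_nonneg _))
            _ ≤ C' * r ^ (t + 1) := by
                have hrt : (0:ℝ) ≤ r ^ t := le_of_lt (pow_pos hr t)
                have : C * r ^ t + ‖lam‖ * (C' * r ^ t)
                    = (C + ‖lam‖ * C') * r ^ t := by ring
                rw [this, pow_succ]
                have : C + ‖lam‖ * C' ≤ C' * r := by nlinarith
                nlinarith


lemma sum_mulVec' {ι m k : Type*} [Fintype k] (F : Finset ι)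
    (A : ι → Matrix m k ℝ) (u : k → ℝ) :
    (∑ i ∈ F, A i) *ᵥ u = ∑ i ∈ F, (A i *ᵥ u) := by
  ext x
  simp only [Matrix.mulVec, dotProduct, Finset.sum_apply, Matrix.sum_apply,
    Finset.sum_mul]
  rw [Finset.sum_comm]

/-- Finite-time computation of the asymptotic value at a node.
Suppose `q(z) = (z − 1) p(z)` is monic with `e_jᵀ q(P) = 0`, where
`p(z) = ∑_{i=0}^{M} β_i z^i` has all its complex roots strictly inside the unit
circle.  Then `∑ β_i ≠ 0`, the sequence `w_j^t = (P^t w⁰)_j` converges, and its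
limit is `(∑_{i=0}^{M} β_i w_j^i) / (∑_{i=0}^{M} β_i)`. -/
theorem finite_time_value_from_first_iterates
    (n : ℕ) (P : Matrix (Fin n) (Fin n) ℝ) (w0 : Fin n → ℝ)
    (M : ℕ) (β : ℕ → ℝ) (j : Fin n)
    (p : Polynomial ℝ)
    (hp : p = ∑ i ∈ Finset.range (M + 1), Polynomial.C (β i) * Polynomial.X ^ i)
    (q : Polynomial ℝ)
    (hq : q = (Polynomial.X - 1) * p)
    (hmonic : q.Monic)
    (hann : ∀ l : Fin n, (Polynomial.aeval P q) j l = 0)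
    (hroots : ∀ z : ℂ, (p.map (algebraMap ℝ ℂ)).IsRoot z → ‖z‖ < 1) :
    (∑ i ∈ Finset.range (M + 1), β i) ≠ 0 ∧
    Tendsto (fun t : ℕ => ((P ^ t) *ᵥ w0) j) atTop
      (nhds ((∑ i ∈ Finset.range (M + 1), β i * ((P ^ i) *ᵥ w0) j) /
        (∑ i ∈ Finset.range (M + 1), β i))) := by
  set W : ℕ → ℝ := fun t => ((P ^ t) *ᵥ w0) j with hW
  -- p is monic
  have hX1 : (X - 1 : Polynomial ℝ).Monic := by
    have := monic_X_sub_C (1 : ℝ); simpa using this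
  have hpm : p.Monic := hX1.of_mul_monic_left (hq ▸ hmonic)
  have hp0 : p ≠ 0 := hpm.ne_zero
  -- row of q(P) annihilates
  have hrow : ∀ u : Fin n → ℝ, ((Polynomial.aeval P q) *ᵥ u) j = 0 := by
    intro u
    simp [Matrix.mulVec, dotProduct, hann]
  -- aeval P q decomposition
  have haq : Polynomial.aeval P q = ∑ i ∈ range (M + 1), β i • (P ^ (i+1) - P ^ i) := by
    rw [hq, hp, Finset.mul_sum, map_sum]
    apply Finset.sum_congr rfl
    intro i _
    have : (X - 1 : Polynomial ℝ) * (C (β i) * X ^ i) = C (β i) * (X ^ (i+1) - X ^ i) := by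
      ring
    rw [this, _root_.map_mul, map_sub, map_pow, map_pow]
    simp [Algebra.smul_def]
  -- the recurrence for differences
  have hWrec : ∀ t, ∑ i ∈ range (M + 1), β i * (W (t + i + 1) - W (t + i)) = 0 := by
    intro t
    have h0 := hrow ((P ^ t) *ᵥ w0)
    rw [haq, sum_mulVec'] at h0
    rw [Finset.sum_apply] at h0
    calc ∑ i ∈ range (M + 1), β i * (W (t + i + 1) - W (t + i))
        = ∑ i ∈ range (M + 1), ((β i • (P ^ (i+1) - P ^ i)) *ᵥ ((P ^ t) *ᵥ w0)) j := by
          apply Finset.sum_congr rfl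
          intro i _
          rw [Matrix.smul_mulVec, Matrix.sub_mulVec]
          simp only [Pi.smul_apply, Pi.sub_apply, smul_eq_mul]
          rw [Matrix.mulVec_mulVec, Matrix.mulVec_mulVec, ← pow_add, ← pow_add]
          have e1 : i + 1 + t = t + i + 1 := by omega
          have e2 : i + t = t + i := by omega
          rw [e1, e2]
      _ = 0 := h0
  -- coefficients of p
  have hcoeff : ∀ i ∈ range (M + 1), p.coeff i = β i := by
    intro i hi
    rw [hp, Polynomial.finset_sum_coeff]
    simp only [Polynomial.coeff_C_mul, Polynomial.coeff_X_pow]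
    rw [Finset.sum_eq_single i]
    · simp
    · intro b _ hb; simp [Ne.symm hb]
    · intro h; exact absurd hi h
  have hdeg : p.natDegree ≤ M := by
    rw [hp]
    apply Polynomial.natDegree_sum_le_of_forall_le
    intro i hi
    exact le_trans (Polynomial.natDegree_C_mul_le _ _)
      (by simpa using Finset.mem_range_succ_iff.mp hi)
  -- complex version
  set pC : Polynomial ℂ := p.map (algebraMap ℝ ℂ) with hpC
  have hpCm : pC.Monic := hpm.map _
  have hpC0 : pC ≠ 0 := hpCm.ne_zero
  have hpCdeg : pC.natDegree = p.natDegree := hpm.natDegree_map _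
  -- sum of β is nonzero
  have hS : (∑ i ∈ range (M + 1), β i) ≠ 0 := by
    intro h
    have heval : p.eval 1 = ∑ i ∈ range (M + 1), β i := by
      rw [hp]; simp [Polynomial.eval_finset_sum]
    have : pC.IsRoot 1 := by
      rw [Polynomial.IsRoot, hpC, Polynomial.eval_one_map, heval, h, map_zero]
    have := hroots 1 this
    simp at this
  -- choice of r
  obtain ⟨r, hr0, hr1, hrroots⟩ :
      ∃ r : ℝ, 0 < r ∧ r < 1 ∧ ∀ z ∈ pC.roots, ‖z‖ < r := by
    set F : Finset ℝ := insert (1/2 : ℝ) (pC.roots.toFinset.image (fun z : ℂ => ‖z‖)) with hF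
    have hFne : F.Nonempty := ⟨1/2, Finset.mem_insert_self _ _⟩
    set m : ℝ := F.max' hFne with hm
    have hm1 : m < 1 := by
      rw [hm, Finset.max'_lt_iff]
      intro x hx
      rw [hF, Finset.mem_insert] at hx
      rcases hx with h | h
      · rw [h]; norm_num
      · obtain ⟨z, hz, rfl⟩ := Finset.mem_image.mp h
        exact hroots z ((Polynomial.mem_roots hpC0).mp (Multiset.mem_toFinset.mp hz))
    have hm0 : (0:ℝ) < m := lt_of_lt_of_le (by norm_num)
      (Finset.le_max' F (1/2) (Finset.mem_insert_self _ _))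
    refine ⟨(m + 1) / 2, by linarith, by linarith, ?_⟩
    intro z hz
    have : ‖z‖ ≤ m := Finset.le_max' F _ (by
      rw [hF, Finset.mem_insert]
      exact Or.inr (Finset.mem_image.mpr ⟨z, Multiset.mem_toFinset.mpr hz, rfl⟩))
    linarith
  -- complex difference sequence
  set v : ℕ → ℝ := fun t => W (t + 1) - W t with hv
  set vC : ℕ → ℂ := fun t => ((v t : ℝ) : ℂ) with hvC
  have hvCrec : ∀ t, ∑ i ∈ range (pC.natDegree + 1), pC.coeff i * vC (t + i) = 0 := by
    intro t
    have hsub : range (pC.natDegree + 1) ⊆ range (M + 1) := by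
      apply Finset.range_subset_range.mpr; rw [hpCdeg]; omega
    rw [Finset.sum_subset hsub (fun i _ hi => by
      have : pC.natDegree < i := by
        simp only [Finset.mem_range, not_lt] at hi ⊢
        omega
      rw [Polynomial.coeff_eq_zero_of_natDegree_lt this, zero_mul])]
    have : ∀ i ∈ range (M + 1), pC.coeff i * vC (t + i)
        = ((β i * (W (t + i + 1) - W (t + i)) : ℝ) : ℂ) := by
      intro i hi
      rw [hpC, Polynomial.coeff_map, hcoeff i hi]
      simp only [hvC, hv, Complex.coe_algebraMap]
      push_cast
      ring
    rw [Finset.sum_congr rfl this, ← Complex.ofReal_sum, hWrec t, Complex.ofReal_zero]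
  -- decay
  obtain ⟨C, hC0, hC⟩ := decay_aux r hr0 pC.natDegree pC rfl hpCm hrroots vC hvCrec
  have hvbound : ∀ t, |v t| ≤ C * r ^ t := by
    intro t
    have := hC t
    rwa [hvC, Complex.norm_real, Real.norm_eq_abs] at this
  have hsummable : Summable v := by
    apply Summable.of_norm_bounded
      ((summable_geometric_of_lt_one hr0.le hr1).mul_left C)
    intro t
    rw [Real.norm_eq_abs]
    exact hvbound t
  -- convergence of W
  set L : ℝ := W 0 + ∑' t, v t with hL
  have hWlim : Tendsto W atTop (nhds L) := by
    have h1 : Tendsto (fun t => ∑ s ∈ range t, v s) atTop (nhds (∑' t, v t)) :=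
      hsummable.hasSum.tendsto_sum_nat
    have h2 : ∀ t, W t = W 0 + ∑ s ∈ range t, v s := by
      intro t
      rw [hv]
      rw [Finset.sum_range_sub (fun s => W s)]
      ring
    have h3 : Tendsto (fun t => W 0 + ∑ s ∈ range t, v s) atTop (nhds (W 0 + ∑' t, v t)) :=
      (h1.const_add (W 0))
    exact (funext h2 : W = _) ▸ h3
  -- constancy of u
  have hu : ∀ t, ∑ i ∈ range (M + 1), β i * W (t + i) = ∑ i ∈ range (M + 1), β i * W i := by
    intro t
    induction t with
    | zero => simp
    | succ t iht =>
        rw [← iht]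
        have h0 := hWrec t
        have : ∑ i ∈ range (M + 1), β i * W (t + 1 + i)
            = ∑ i ∈ range (M + 1), (β i * (W (t + i + 1) - W (t + i)) + β i * W (t + i)) := by
          apply Finset.sum_congr rfl
          intro i _
          have : t + 1 + i = t + i + 1 := by omega
          rw [this]; ring
        rw [this, Finset.sum_add_distrib, h0, zero_add]
  -- limit of u
  have hulim : Tendsto (fun t => ∑ i ∈ range (M + 1), β i * W (t + i)) atTop
      (nhds (∑ i ∈ range (M + 1), β i * L)) := by
    apply tendsto_finset_sum
    intro i _
    exact (hWlim.comp (tendsto_add_atTop_nat i)).const_mul (β i)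
  have huconst : Tendsto (fun t => ∑ i ∈ range (M + 1), β i * W (t + i)) atTop
      (nhds (∑ i ∈ range (M + 1), β i * W i)) := by
    have : (fun t : ℕ => ∑ i ∈ range (M + 1), β i * W (t + i))
        = fun _ : ℕ => ∑ i ∈ range (M + 1), β i * W i := funext hu
    rw [this]
    exact tendsto_const_nhds
  have hkey : ∑ i ∈ range (M + 1), β i * W i = (∑ i ∈ range (M + 1), β i) * L := by
    have := tendsto_nhds_unique huconst hulim
    rw [this, Finset.sum_mul]
  refine ⟨hS, ?_⟩
  have : (∑ i ∈ range (M + 1), β i * W i) / (∑ i ∈ range (M + 1), β i) = L := by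
    rw [hkey, mul_comm, mul_div_assoc, div_self hS, mul_one]
  have heq : (∑ i ∈ Finset.range (M + 1), β i * ((P ^ i) *ᵥ w0) j)
      = ∑ i ∈ range (M + 1), β i * W i := rfl
  rw [heq, this]
  exact hWlim
end

section
/- Let P be an n×n nonnegative, column stochastic (each column sums to 1), primitive (some power of P has all entries strictly positive) real matrix, with n ≥ 2. Let y^t = P^t y^0 for arbitrary y^0 ∈ ℝ^n and x^t = P^t 𝟙, where 𝟙 is the all-ones vector. Suppose q(z) = (z − 1)·p(z) is a monic real polynomial with e_jᵀ q(P) = 0, where p(z) = Σ_{i=0}^{M} β_i z^i and every complex root of p has modulus strictly less than 1. Then Σ_{i=0}^{M} β_i x_j^i ≠ 0, the ratio y_j^t / x_j^t converges as t → ∞, and lim_{t→∞} y_j^t / x_j^t = (Σ_{i=0}^{M} β_i y_j^i) / (Σ_{i=0}^{M} β_i x_j^i) = (Σ_{i=1}^n y_i^0)/n; that is, node j computes the exact network average in finite time from its first M+1 observations of the two iterations. -/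
open Filter Matrix Finset Polynomial


namespace FTC

variable {n : ℕ}

/-- ℓ¹ norm of a vector. -/
noncomputable def l1 (z : Fin n → ℝ) : ℝ := ∑ l, |z l|

lemma l1_nonneg (z : Fin n → ℝ) : 0 ≤ l1 z :=
  Finset.sum_nonneg fun _ _ => abs_nonneg _

lemma abs_le_l1 (z : Fin n → ℝ) (j : Fin n) : |z j| ≤ l1 z :=
  Finset.single_le_sum (fun i _ => abs_nonneg (z i)) (Finset.mem_univ j)

lemma l1_sub_le (x y : Fin n → ℝ) : l1 (x - y) ≤ l1 x + l1 y := by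
  rw [l1, l1, l1, ← Finset.sum_add_distrib]
  exact Finset.sum_le_sum fun i _ => (abs_sub _ _)

lemma sum_mulVec_eq (A : Matrix (Fin n) (Fin n) ℝ)
    (hc : ∀ l : Fin n, ∑ i, A i l = 1) (z : Fin n → ℝ) :
    ∑ i, (A *ᵥ z) i = ∑ i, z i := by
  simp only [mulVec, dotProduct]
  rw [Finset.sum_comm]
  simp only [← Finset.sum_mul, hc, one_mul]

lemma l1_mulVec_le (A : Matrix (Fin n) (Fin n) ℝ)
    (hA : ∀ i l, 0 ≤ A i l) (hc : ∀ l : Fin n, ∑ i, A i l = 1) (z : Fin n → ℝ) :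
    l1 (A *ᵥ z) ≤ l1 z := by
  calc l1 (A *ᵥ z) = ∑ i, |∑ l, A i l * z l| := rfl
    _ ≤ ∑ i, ∑ l, |A i l * z l| :=
        Finset.sum_le_sum fun i _ => Finset.abs_sum_le_sum_abs _ _
    _ = ∑ l, (∑ i, A i l) * |z l| := by
        rw [Finset.sum_comm]
        simp only [abs_mul, Finset.sum_mul]
        refine Finset.sum_congr rfl fun l _ => Finset.sum_congr rfl fun i _ => ?_
        rw [abs_of_nonneg (hA i l)]
    _ = l1 z := by simp [hc, l1]

lemma l1_contract (A : Matrix (Fin n) (Fin n) ℝ)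
    (hc : ∀ l : Fin n, ∑ i, A i l = 1) (δ : ℝ)
    (hδ : ∀ i l, δ ≤ A i l) (z : Fin n → ℝ) (hz : ∑ i, z i = 0) :
    l1 (A *ᵥ z) ≤ (1 - n * δ) * l1 z := by
  have key : ∀ i, (A *ᵥ z) i = ∑ l, (A i l - δ) * z l := by
    intro i
    simp only [mulVec, dotProduct, sub_mul, Finset.sum_sub_distrib, ← Finset.mul_sum, hz,
      mul_zero, sub_zero]
  calc l1 (A *ᵥ z) = ∑ i, |∑ l, (A i l - δ) * z l| := by
        unfold l1; exact Finset.sum_congr rfl fun i _ => by rw [key i]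
    _ ≤ ∑ i, ∑ l, (A i l - δ) * |z l| := by
        refine Finset.sum_le_sum fun i _ => ?_
        refine (Finset.abs_sum_le_sum_abs _ _).trans ?_
        refine Finset.sum_le_sum fun l _ => ?_
        rw [abs_mul, abs_of_nonneg (sub_nonneg.2 (hδ i l))]
    _ = ∑ l, (1 - n * δ) * |z l| := by
        rw [Finset.sum_comm]
        refine Finset.sum_congr rfl fun l _ => ?_
        rw [← Finset.sum_mul, Finset.sum_sub_distrib, hc l, Finset.sum_const,
          Finset.card_univ, Fintype.card_fin, nsmul_eq_mul]
    _ = (1 - n * δ) * l1 z := by rw [l1, Finset.mul_sum]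

lemma pow_nonneg' (P : Matrix (Fin n) (Fin n) ℝ) (h : ∀ i l, 0 ≤ P i l) :
    ∀ t i l, 0 ≤ (P ^ t) i l := by
  intro t
  induction t with
  | zero => intro i l; simp [Matrix.one_apply]; positivity
  | succ t ih =>
      intro i l
      rw [pow_succ, Matrix.mul_apply]
      exact Finset.sum_nonneg fun m _ => mul_nonneg (ih i m) (h m l)

lemma pow_colsum (P : Matrix (Fin n) (Fin n) ℝ) (hc : ∀ l : Fin n, ∑ i, P i l = 1) :
    ∀ t (l : Fin n), ∑ i, (P ^ t) i l = 1 := by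
  intro t
  induction t with
  | zero => intro l; simp [Matrix.one_apply]
  | succ t ih =>
      intro l
      simp only [pow_succ, Matrix.mul_apply]
      rw [Finset.sum_comm]
      simp only [← Finset.sum_mul, ih, one_mul, hc]

end FTC

namespace FTC
variable {n : ℕ}
variable (P : Matrix (Fin n) (Fin n) ℝ)

lemma l1_pow_le (hnn : ∀ i l, 0 ≤ P i l) (hc : ∀ l : Fin n, ∑ i, P i l = 1)
    (t : ℕ) (z : Fin n → ℝ) : l1 ((P ^ t) *ᵥ z) ≤ l1 z := by
  induction t with
  | zero => simp [pow_zero, Matrix.one_mulVec]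
  | succ t ih =>
      rw [pow_succ', ← Matrix.mulVec_mulVec]
      exact (l1_mulVec_le P hnn hc _).trans ih

lemma sum_pow_mulVec (hc : ∀ l : Fin n, ∑ i, P i l = 1) (t : ℕ) (z : Fin n → ℝ) :
    ∑ i, ((P ^ t) *ᵥ z) i = ∑ i, z i :=
  sum_mulVec_eq (P ^ t) (pow_colsum P hc t) z

lemma l1_pow_mul_contract (hnn : ∀ i l, 0 ≤ P i l) (hc : ∀ l : Fin n, ∑ i, P i l = 1)
    (hn : 0 < n) (k : ℕ) (δ : ℝ) (hδ : ∀ i l, δ ≤ (P ^ k) i l) :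
    ∀ (m : ℕ) (z : Fin n → ℝ), ∑ i, z i = 0 →
      l1 ((P ^ (k * m)) *ᵥ z) ≤ (1 - n * δ) ^ m * l1 z := by
  intro m
  induction m with
  | zero => intro z _; simp
  | succ m ih =>
      intro z hz
      have h1 : P ^ (k * (m + 1)) = P ^ (k * m) * P ^ k := by
        rw [← pow_add]; ring_nf
      rw [h1, ← Matrix.mulVec_mulVec]
      calc l1 ((P ^ (k * m)) *ᵥ ((P ^ k) *ᵥ z))
          ≤ (1 - n * δ) ^ m * l1 ((P ^ k) *ᵥ z) := by
            refine ih _ ?_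
            rw [sum_pow_mulVec P hc k z, hz]
        _ ≤ (1 - n * δ) ^ m * ((1 - n * δ) * l1 z) := by
            refine mul_le_mul_of_nonneg_left ?_ (pow_nonneg ?_ m)
            · exact l1_contract (P ^ k) (pow_colsum P hc k) δ hδ z hz
            · have hl : (n : ℝ) * δ ≤ 1 := by
                have := pow_colsum P hc k ⟨0, hn⟩
                calc (n : ℝ) * δ = ∑ _i : Fin n, δ := by
                      rw [Finset.sum_const, Finset.card_univ, Fintype.card_fin, nsmul_eq_mul]
                  _ ≤ ∑ i, (P ^ k) i ⟨0, hn⟩ := Finset.sum_le_sum fun i _ => hδ i _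
                  _ = 1 := this
              linarith
        _ = (1 - n * δ) ^ (m + 1) * l1 z := by ring

end FTC

namespace FTC
variable {n : ℕ}
variable (P : Matrix (Fin n) (Fin n) ℝ)

lemma l1_pow_decay (hnn : ∀ i l, 0 ≤ P i l) (hc : ∀ l : Fin n, ∑ i, P i l = 1)
    (hn : 0 < n) (k : ℕ) (δ : ℝ) (hδ : ∀ i l, δ ≤ (P ^ k) i l)
    (t : ℕ) (z : Fin n → ℝ) (hz : ∑ i, z i = 0) :
    l1 ((P ^ t) *ᵥ z) ≤ (1 - n * δ) ^ (t / k) * l1 z := by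
  have h1 : P ^ t = P ^ (t % k) * P ^ (k * (t / k)) := by
    rw [← pow_add, Nat.mod_add_div]
  rw [h1, ← Matrix.mulVec_mulVec]
  exact (l1_pow_le P hnn hc _ _).trans
    (l1_pow_mul_contract P hnn hc hn k δ hδ (t / k) z hz)

lemma tendsto_pow_div_zero {ρ : ℝ} (hρ0 : 0 ≤ ρ) (hρ1 : ρ < 1) (k : ℕ) (hk : 1 ≤ k) :
    Tendsto (fun t : ℕ => ρ ^ (t / k)) atTop (nhds 0) := by
  refine (tendsto_pow_atTop_nhds_zero_of_lt_one hρ0 hρ1).comp ?_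
  refine tendsto_atTop_atTop.2 fun b => ⟨b * k, fun t ht => ?_⟩
  exact (Nat.le_div_iff_mul_le hk).2 ht

lemma entry_tendsto_zero (hnn : ∀ i l, 0 ≤ P i l) (hc : ∀ l : Fin n, ∑ i, P i l = 1)
    (hn : 0 < n) (k : ℕ) (hk : 1 ≤ k) (δ : ℝ) (hδpos : 0 < δ)
    (hδ : ∀ i l, δ ≤ (P ^ k) i l) (j : Fin n)
    (z : Fin n → ℝ) (hz : ∑ i, z i = 0) :
    Tendsto (fun t : ℕ => ((P ^ t) *ᵥ z) j) atTop (nhds 0) := by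
  have hρ0 : (0:ℝ) ≤ 1 - n * δ := by
    have hl : (n : ℝ) * δ ≤ 1 := by
      have h2 := pow_colsum P hc k ⟨0, hn⟩
      calc (n : ℝ) * δ = ∑ _i : Fin n, δ := by
            rw [Finset.sum_const, Finset.card_univ, Fintype.card_fin, nsmul_eq_mul]
        _ ≤ ∑ i, (P ^ k) i ⟨0, hn⟩ := Finset.sum_le_sum fun i _ => hδ i _
        _ = 1 := h2
    linarith
  have hρ1 : 1 - (n:ℝ) * δ < 1 := by
    have : (0:ℝ) < n * δ := by positivity
    linarith
  have hten : Tendsto (fun t : ℕ => (1 - n * δ) ^ (t / k) * l1 z) atTop (nhds 0) := by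
    have := (tendsto_pow_div_zero hρ0 hρ1 k hk).mul_const (l1 z)
    rwa [zero_mul] at this
  exact squeeze_zero_norm
    (fun t => (abs_le_l1 _ j).trans (l1_pow_decay P hnn hc hn k δ hδ t z hz)) hten

lemma entry_cauchy (hnn : ∀ i l, 0 ≤ P i l) (hc : ∀ l : Fin n, ∑ i, P i l = 1)
    (hn : 0 < n) (k : ℕ) (hk : 1 ≤ k) (δ : ℝ) (hδpos : 0 < δ)
    (hδ : ∀ i l, δ ≤ (P ^ k) i l) (j : Fin n) (w : Fin n → ℝ) :
    ∃ a : ℝ, Tendsto (fun t : ℕ => ((P ^ t) *ᵥ w) j) atTop (nhds a) := by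
  set ρ : ℝ := 1 - n * δ with hρdef
  have hρ0 : (0:ℝ) ≤ ρ := by
    have hl : (n : ℝ) * δ ≤ 1 := by
      have h2 := pow_colsum P hc k ⟨0, hn⟩
      calc (n : ℝ) * δ = ∑ _i : Fin n, δ := by
            rw [Finset.sum_const, Finset.card_univ, Fintype.card_fin, nsmul_eq_mul]
        _ ≤ ∑ i, (P ^ k) i ⟨0, hn⟩ := Finset.sum_le_sum fun i _ => hδ i _
        _ = 1 := h2
    simp only [hρdef]; linarith
  have hρ1 : ρ < 1 := by
    have : (0:ℝ) < n * δ := by positivity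
    simp only [hρdef]; linarith
  set C : ℝ := 2 * l1 w + 1 with hCdef
  have hC : 0 < C := by
    have := l1_nonneg w; simp only [hCdef]; linarith
  suffices h : CauchySeq (fun t : ℕ => ((P ^ t) *ᵥ w) j) by
    exact cauchySeq_tendsto_of_complete h
  refine Metric.cauchySeq_iff'.2 fun ε hε => ?_
  obtain ⟨m, hm⟩ := ((tendsto_pow_atTop_nhds_zero_of_lt_one hρ0 hρ1).eventually
    (gt_mem_nhds (show ε / C > 0 by positivity))).exists
  refine ⟨k * m, fun t ht => ?_⟩
  -- the difference
  have hzsum : ∑ i, ((P ^ (t - k * m)) *ᵥ w - w) i = 0 := by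
    simp only [Pi.sub_apply]
    rw [Finset.sum_sub_distrib, sum_pow_mulVec P hc, sub_self]
  have hdiff : ((P ^ t) *ᵥ w) j - ((P ^ (k * m)) *ᵥ w) j
      = ((P ^ (k * m)) *ᵥ ((P ^ (t - k * m)) *ᵥ w - w)) j := by
    rw [Matrix.mulVec_sub, Matrix.mulVec_mulVec, ← pow_add]
    have : k * m + (t - k * m) = t := by omega
    rw [this]
    simp [Pi.sub_apply]
  have hl1z : l1 ((P ^ (t - k * m)) *ᵥ w - w) ≤ 2 * l1 w := by
    refine (l1_sub_le _ _).trans ?_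
    have := l1_pow_le P hnn hc (t - k * m) w
    linarith
  have hbound : |((P ^ t) *ᵥ w) j - ((P ^ (k * m)) *ᵥ w) j| ≤ ρ ^ m * C := by
    rw [hdiff]
    refine (abs_le_l1 _ j).trans ?_
    have h1 := l1_pow_mul_contract P hnn hc hn k δ hδ m _ hzsum
    have h2 : l1 ((P ^ (t - k * m)) *ᵥ w - w) ≤ C := by
      simp only [hCdef]; linarith
    calc l1 ((P ^ (k * m)) *ᵥ ((P ^ (t - k * m)) *ᵥ w - w))
        ≤ ρ ^ m * l1 ((P ^ (t - k * m)) *ᵥ w - w) := h1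
      _ ≤ ρ ^ m * C := mul_le_mul_of_nonneg_left h2 (pow_nonneg hρ0 m)
  rw [Real.dist_eq]
  calc |((P ^ t) *ᵥ w) j - ((P ^ (k * m)) *ᵥ w) j| ≤ ρ ^ m * C := hbound
    _ < (ε / C) * C := by exact mul_lt_mul_of_pos_right hm hC
    _ = ε := by field_simp

end FTC


/-- Finite-time exact ratio consensus, Theorem 1 of the paper.
For a nonnegative, column-stochastic, primitive matrix `P` (`n ≥ 2`), with
`y^t = P^t y⁰` and `x^t = P^t 𝟙`, if `q(z) = (z − 1) p(z)` is monic with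
`e_jᵀ q(P) = 0`, where `p(z) = ∑_{i=0}^{M} β_i z^i` has all complex roots of
modulus `< 1`, then `∑ β_i x_j^i ≠ 0`, the ratio `y_j^t / x_j^t` converges,
and the limit equals `(∑ β_i y_j^i)/(∑ β_i x_j^i)`, which in turn equals the
exact network average `(∑ i, y⁰ i)/n`. -/
theorem finite_time_exact_ratio_consensus
    (n : ℕ) (hn : 2 ≤ n) (P : Matrix (Fin n) (Fin n) ℝ)
    (hnonneg : ∀ i j, 0 ≤ P i j)
    (hcol : ∀ j : Fin n, ∑ i : Fin n, P i j = 1)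
    (hprim : ∃ k : ℕ, 1 ≤ k ∧ ∀ i j, 0 < (P ^ k) i j)
    (y0 : Fin n → ℝ) (M : ℕ) (β : ℕ → ℝ) (j : Fin n)
    (p : Polynomial ℝ)
    (hp : p = ∑ i ∈ Finset.range (M + 1), Polynomial.C (β i) * Polynomial.X ^ i)
    (q : Polynomial ℝ)
    (hq : q = (Polynomial.X - 1) * p)
    (hmonic : q.Monic)
    (hann : ∀ l : Fin n, (Polynomial.aeval P q) j l = 0)
    (hroots : ∀ z : ℂ, (p.map (algebraMap ℝ ℂ)).IsRoot z → ‖z‖ < 1) :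
    (∑ i ∈ Finset.range (M + 1), β i * ((P ^ i) *ᵥ (fun _ => (1 : ℝ))) j) ≠ 0 ∧
    Tendsto
      (fun t : ℕ => ((P ^ t) *ᵥ y0) j / ((P ^ t) *ᵥ (fun _ => (1 : ℝ))) j)
      atTop
      (nhds ((∑ i ∈ Finset.range (M + 1), β i * ((P ^ i) *ᵥ y0) j) /
        (∑ i ∈ Finset.range (M + 1), β i * ((P ^ i) *ᵥ (fun _ => (1 : ℝ))) j))) ∧
    (∑ i ∈ Finset.range (M + 1), β i * ((P ^ i) *ᵥ y0) j) /
        (∑ i ∈ Finset.range (M + 1), β i * ((P ^ i) *ᵥ (fun _ => (1 : ℝ))) j)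
      = (∑ i : Fin n, y0 i) / n := by
  classical
  obtain ⟨k, hk, hQpos⟩ := hprim
  have hn0 : 0 < n := by omega
  haveI : Nonempty (Fin n) := ⟨⟨0, hn0⟩⟩
  set δ : ℝ := Finset.univ.inf' Finset.univ_nonempty
    (fun pr : Fin n × Fin n => (P ^ k) pr.1 pr.2) with hδdef
  have hδpos : 0 < δ := by
    rw [hδdef, Finset.lt_inf'_iff]
    exact fun b _ => hQpos b.1 b.2
  have hδle : ∀ i l, δ ≤ (P ^ k) i l := fun i l =>
    Finset.inf'_le _ (Finset.mem_univ (i, l))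
  -- convergence of the two scalar sequences
  obtain ⟨a, ha⟩ := FTC.entry_cauchy P hnonneg hcol hn0 k hk δ hδpos hδle j (fun _ => 1)
  obtain ⟨b, hb⟩ := FTC.entry_cauchy P hnonneg hcol hn0 k hk δ hδpos hδle j y0
  -- positivity of a
  have hones_sum : ∑ _i : Fin n, (1 : ℝ) = n := by simp
  have hapos : 0 < a := by
    have hev : ∀ t, k ≤ t → δ * n ≤ ((P ^ t) *ᵥ (fun _ => (1:ℝ))) j := by
      intro t ht
      have hsplit : P ^ t = P ^ k * P ^ (t - k) := by
        rw [← pow_add]; congr 1; omega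
      rw [hsplit, ← Matrix.mulVec_mulVec]
      set g : Fin n → ℝ := (P ^ (t - k)) *ᵥ (fun _ => (1:ℝ)) with hgdef
      have hg0 : ∀ l, 0 ≤ g l := by
        intro l
        rw [hgdef]
        simp only [Matrix.mulVec, dotProduct, mul_one]
        exact Finset.sum_nonneg fun m _ => FTC.pow_nonneg' P hnonneg (t - k) l m
      have hgsum : ∑ l, g l = n := by
        rw [hgdef, FTC.sum_pow_mulVec P hcol, hones_sum]
      calc δ * n = ∑ l, δ * g l := by rw [← Finset.mul_sum, hgsum]
        _ ≤ ∑ l, (P ^ k) j l * g l :=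
            Finset.sum_le_sum fun l _ => mul_le_mul_of_nonneg_right (hδle j l) (hg0 l)
        _ = ((P ^ k) *ᵥ g) j := rfl
    have : δ * n ≤ a :=
      ge_of_tendsto ha (Filter.eventually_atTop.2 ⟨k, hev⟩)
    have : (0:ℝ) < δ * n := by positivity
    linarith
  -- the matrix A = p(P)
  have hA : Polynomial.aeval P p = ∑ i ∈ Finset.range (M + 1), β i • P ^ i := by
    rw [hp, map_sum]
    refine Finset.sum_congr rfl fun i _ => ?_
    rw [_root_.map_mul, aeval_C, map_pow, aeval_X, Algebra.smul_def]
  have hAv : ∀ v : Fin n → ℝ, ((Polynomial.aeval P p) *ᵥ v) j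
      = ∑ i ∈ Finset.range (M + 1), β i * ((P ^ i) *ᵥ v) j := by
    intro v
    rw [hA]
    simp only [Matrix.mulVec, dotProduct, Matrix.sum_apply, Matrix.smul_apply, smul_eq_mul,
      Finset.sum_mul, Finset.mul_sum, mul_assoc]
    exact Finset.sum_comm
  -- core identity from the annihilation hypothesis
  have hcore : ∀ v : Fin n → ℝ,
      ((Polynomial.aeval P p) *ᵥ (P *ᵥ v)) j = ((Polynomial.aeval P p) *ᵥ v) j := by
    intro v
    have hq' : Polynomial.aeval P q = (Polynomial.aeval P p) * P - Polynomial.aeval P p := by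
      have hq2 : q = p * X - p := by rw [hq]; ring
      rw [hq2, map_sub, _root_.map_mul, aeval_X]
    have h0 : ((Polynomial.aeval P q) *ᵥ v) j = 0 := by
      show ∑ l, (Polynomial.aeval P q) j l * v l = 0
      exact Finset.sum_eq_zero fun l _ => by rw [hann l, zero_mul]
    rw [hq', Matrix.sub_mulVec] at h0
    have h1 : (((Polynomial.aeval P p) * P) *ᵥ v) j = ((Polynomial.aeval P p) *ᵥ v) j := by
      have := h0
      simp only [Pi.sub_apply] at this
      linarith
    rw [← h1, ← Matrix.mulVec_mulVec]
  -- the "constant sequence" property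
  have hconst : ∀ (w : Fin n → ℝ) (t : ℕ),
      ((Polynomial.aeval P p) *ᵥ ((P ^ t) *ᵥ w)) j = ((Polynomial.aeval P p) *ᵥ w) j := by
    intro w t
    induction t with
    | zero => simp
    | succ t ih =>
        rw [pow_succ', ← Matrix.mulVec_mulVec, hcore ((P ^ t) *ᵥ w)]
        exact ih
  -- shift formula
  have hshift : ∀ (w : Fin n → ℝ) (t : ℕ),
      ((Polynomial.aeval P p) *ᵥ ((P ^ t) *ᵥ w)) j
        = ∑ i ∈ Finset.range (M + 1), β i * ((P ^ (i + t)) *ᵥ w) j := by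
    intro w t
    rw [hAv]
    refine Finset.sum_congr rfl fun i _ => ?_
    rw [Matrix.mulVec_mulVec, ← pow_add]
  -- identification of the invariant with p(1) * limit
  have hlim : ∀ (w : Fin n → ℝ) (c : ℝ),
      Tendsto (fun t : ℕ => ((P ^ t) *ᵥ w) j) atTop (nhds c) →
      ((Polynomial.aeval P p) *ᵥ w) j = p.eval 1 * c := by
    intro w c hw
    have h1 : Tendsto (fun t : ℕ => ∑ i ∈ Finset.range (M + 1), β i * ((P ^ (i + t)) *ᵥ w) j)
        atTop (nhds (∑ i ∈ Finset.range (M + 1), β i * c)) := by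
      refine tendsto_finset_sum _ fun i _ => ?_
      have h2 : Tendsto (fun t : ℕ => ((P ^ (i + t)) *ᵥ w) j) atTop (nhds c) := by
        have h3 := hw.comp (tendsto_add_atTop_nat i)
        have h4 : ((fun t : ℕ => ((P ^ t) *ᵥ w) j) ∘ (fun t => t + i))
            = fun t : ℕ => ((P ^ (i + t)) *ᵥ w) j := by
          funext t; simp [Function.comp, add_comm]
        rwa [h4] at h3
      exact h2.const_mul (β i)
    have h5 : (fun t : ℕ => ∑ i ∈ Finset.range (M + 1), β i * ((P ^ (i + t)) *ᵥ w) j)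
        = fun _ : ℕ => ((Polynomial.aeval P p) *ᵥ w) j := by
      funext t; rw [← hshift w t, hconst w t]
    rw [h5] at h1
    have h6 : ((Polynomial.aeval P p) *ᵥ w) j = ∑ i ∈ Finset.range (M + 1), β i * c :=
      tendsto_nhds_unique tendsto_const_nhds h1
    rw [h6, ← Finset.sum_mul]
    congr 1
    rw [hp]
    simp [eval_finset_sum]
  -- p(1) ≠ 0
  have hp1 : p.eval 1 ≠ 0 := by
    intro h
    have hroot : (p.map (algebraMap ℝ ℂ)).IsRoot 1 := by
      have := Polynomial.IsRoot.map (f := algebraMap ℝ ℂ) (show p.IsRoot 1 from h)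
      simpa using this
    have := hroots 1 hroot
    simp at this
  -- key values
  have hSx : (∑ i ∈ Finset.range (M + 1), β i * ((P ^ i) *ᵥ (fun _ => (1:ℝ))) j)
      = p.eval 1 * a := by
    rw [← hAv]; exact hlim _ a ha
  have hSy : (∑ i ∈ Finset.range (M + 1), β i * ((P ^ i) *ᵥ y0) j)
      = p.eval 1 * b := by
    rw [← hAv]; exact hlim _ b hb
  have hSxne : (∑ i ∈ Finset.range (M + 1), β i * ((P ^ i) *ᵥ (fun _ => (1:ℝ))) j) ≠ 0 := by
    rw [hSx]
    exact mul_ne_zero hp1 (ne_of_gt hapos)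
  have hane : a ≠ 0 := ne_of_gt hapos
  -- the limit relation  n * b = (∑ y0) * a
  set S : ℝ := ∑ i : Fin n, y0 i with hSdef
  have hnb : (n : ℝ) * b = S * a := by
    set z : Fin n → ℝ := fun i => (n : ℝ) * y0 i - S with hzdef
    have hzsum : ∑ i, z i = 0 := by
      simp only [hzdef, Finset.sum_sub_distrib, ← Finset.mul_sum, Finset.sum_const,
        Finset.card_univ, Fintype.card_fin, nsmul_eq_mul, ← hSdef]
      ring
    have hzero := FTC.entry_tendsto_zero P hnonneg hcol hn0 k hk δ hδpos hδle j z hzsum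
    have hdecomp : ∀ t : ℕ, ((P ^ t) *ᵥ z) j
        = (n : ℝ) * ((P ^ t) *ᵥ y0) j - S * ((P ^ t) *ᵥ (fun _ => (1:ℝ))) j := by
      intro t
      simp only [Matrix.mulVec, dotProduct, hzdef, Finset.mul_sum, mul_one]
      rw [← Finset.sum_sub_distrib]
      exact Finset.sum_congr rfl fun l _ => by ring
    have htend2 : Tendsto (fun t : ℕ => ((P ^ t) *ᵥ z) j) atTop (nhds ((n:ℝ) * b - S * a)) := by
      have := (hb.const_mul (n:ℝ)).sub (ha.const_mul S)
      simpa only [← hdecomp] using this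
    have := tendsto_nhds_unique htend2 hzero
    linarith
  have hnR : (0:ℝ) < (n:ℝ) := by exact_mod_cast hn0
  refine ⟨hSxne, ?_, ?_⟩
  · have hdiv : Tendsto
        (fun t : ℕ => ((P ^ t) *ᵥ y0) j / ((P ^ t) *ᵥ (fun _ => (1:ℝ))) j)
        atTop (nhds (b / a)) := hb.div ha hane
    have heq : (∑ i ∈ Finset.range (M + 1), β i * ((P ^ i) *ᵥ y0) j) /
        (∑ i ∈ Finset.range (M + 1), β i * ((P ^ i) *ᵥ (fun _ => (1:ℝ))) j) = b / a := by
      rw [hSx, hSy, mul_div_mul_left b a hp1]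
    rw [heq]
    exact hdiv
  · rw [hSx, hSy, mul_div_mul_left b a hp1, div_eq_div_iff hane (ne_of_gt hnR)]
    linarith
end

section
/- Let E be a finite-dimensional real inner product space, F, g : E → ℝ convex functions, and ρ > 0. Suppose X^{k+1}, z^k, z^{k+1}, λ^k, λ^{k+1} ∈ E satisfy one ADMM step: X^{k+1} is a global minimizer over E of x ↦ F(x) + g(z^k) + ⟨λ^k, x − z^k⟩ + (ρ/2)‖x − z^k‖²; z^{k+1} is a global minimizer over E of z ↦ F(X^{k+1}) + g(z) + ⟨λ^k, X^{k+1} − z⟩ + (ρ/2)‖X^{k+1} − z‖²; and λ^{k+1} = λ^k + ρ(X^{k+1} − z^{k+1}). Then for all X, z ∈ E: F(X^{k+1}) − F(X) + g(z^{k+1}) − g(z) ≤ ⟨λ^{k+1}, (X − X^{k+1}) − (z − z^{k+1})⟩ + ρ⟨X − X^{k+1}, z^{k+1} − z^k⟩. -/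
open RealInnerProductSpace

private lemma aux_small (a c : ℝ) (h : ∀ t : ℝ, 0 < t → t ≤ 1 → a * t ≤ c * t ^ 2) :
    a ≤ 0 := by
  have h' : ∀ t : ℝ, 0 < t → t ≤ 1 → a ≤ c * t := by
    intro t ht ht1
    have h2 := h t ht ht1
    nlinarith
  by_contra hpos
  push_neg at hpos
  rcases le_or_gt c 0 with hc | hc
  · have := h' 1 one_pos le_rfl
    nlinarith
  · have ht1 : (0:ℝ) < min 1 (a / (2 * c)) := lt_min one_pos (by positivity)
    have h2 := h' _ ht1 (min_le_left _ _)
    have h3 : c * min 1 (a / (2 * c)) ≤ c * (a / (2 * c)) :=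
      mul_le_mul_of_nonneg_left (min_le_right _ _) hc.le
    have h4 : c * (a / (2 * c)) = a / 2 := by field_simp
    linarith

private lemma min_linearize {E : Type*} [NormedAddCommGroup E] [InnerProductSpace ℝ E]
    (f : E → ℝ) (hf : ConvexOn ℝ Set.univ f) (ρ : ℝ) (w x0 y : E)
    (hmin : ∀ x : E, f x0 + ⟪w, x0⟫ + ρ / 2 * ‖x0 - y‖ ^ 2 ≤
      f x + ⟪w, x⟫ + ρ / 2 * ‖x - y‖ ^ 2)
    (X : E) : f x0 - f X ≤ ⟪w + ρ • (x0 - y), X - x0⟫ := by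
  have key : f x0 - f X - ⟪w + ρ • (x0 - y), X - x0⟫ ≤ 0 := by
    apply aux_small _ (ρ / 2 * ‖X - x0‖ ^ 2)
    intro t ht ht1
    set v := X - x0 with hv
    have hxt : x0 + t • v = (1 - t) • x0 + t • X := by
      rw [hv, sub_smul, one_smul, smul_sub]; abel
    have hconv : f (x0 + t • v) ≤ (1 - t) * f x0 + t * f X := by
      rw [hxt]
      exact hf.2 (Set.mem_univ x0) (Set.mem_univ X) (by linarith) ht.le (by ring)
    have hm := hmin (x0 + t • v)
    have hinner : ⟪w, x0 + t • v⟫ = ⟪w, x0⟫ + t * ⟪w, v⟫ := by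
      rw [inner_add_right, real_inner_smul_right]
    have hnorm : ‖x0 + t • v - y‖ ^ 2 =
        ‖x0 - y‖ ^ 2 + 2 * (t * ⟪x0 - y, v⟫) + t ^ 2 * ‖v‖ ^ 2 := by
      have : x0 + t • v - y = (x0 - y) + t • v := by abel
      rw [this, norm_add_sq_real, real_inner_smul_right, norm_smul,
        Real.norm_eq_abs, mul_pow, sq_abs]
    have hexp : ⟪w + ρ • (x0 - y), v⟫ = ⟪w, v⟫ + ρ * ⟪x0 - y, v⟫ := by
      rw [inner_add_left, real_inner_smul_left]
    rw [hexp]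
    rw [hinner, hnorm] at hm
    nlinarith [hconv]
  linarith

/-- One-step ADMM inequality, Eq. (31) in the paper.
Let `E` be a finite-dimensional real inner product space, `F, g : E → ℝ`
convex, `ρ > 0`.  If `(X1, z1, lam1)` results from one ADMM step at `(zk, lamk)`,
then for all `X, z ∈ E`:
`F X1 − F X + g z1 − g z ≤ ⟪lam1, (X − X1) − (z − z1)⟫ + ρ ⟪X − X1, z1 − zk⟫`. -/
theorem admm_one_step_inequality
    {E : Type*} [NormedAddCommGroup E] [InnerProductSpace ℝ E]
    [FiniteDimensional ℝ E]
    (F g : E → ℝ) (hF : ConvexOn ℝ Set.univ F) (hg : ConvexOn ℝ Set.univ g)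
    (ρ : ℝ) (hρ : 0 < ρ)
    (X1 zk z1 lamk lam1 : E)
    (hX : ∀ x : E,
      F X1 + g zk + ⟪lamk, X1 - zk⟫ + ρ / 2 * ‖X1 - zk‖ ^ 2 ≤
      F x + g zk + ⟪lamk, x - zk⟫ + ρ / 2 * ‖x - zk‖ ^ 2)
    (hz : ∀ z : E,
      F X1 + g z1 + ⟪lamk, X1 - z1⟫ + ρ / 2 * ‖X1 - z1‖ ^ 2 ≤
      F X1 + g z + ⟪lamk, X1 - z⟫ + ρ / 2 * ‖X1 - z‖ ^ 2)
    (hlam : lam1 = lamk + ρ • (X1 - z1)) :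
    ∀ X z : E,
      F X1 - F X + g z1 - g z ≤
        ⟪lam1, (X - X1) - (z - z1)⟫ + ρ * ⟪X - X1, z1 - zk⟫ := by
  intro X z
  have h1 : F X1 - F X ≤ ⟪lamk + ρ • (X1 - zk), X - X1⟫ := by
    apply min_linearize F hF ρ lamk X1 zk _ X
    intro x
    have := hX x
    have e1 : ⟪lamk, X1 - zk⟫ = ⟪lamk, X1⟫ - ⟪lamk, zk⟫ := inner_sub_right _ _ _
    have e2 : ⟪lamk, x - zk⟫ = ⟪lamk, x⟫ - ⟪lamk, zk⟫ := inner_sub_right _ _ _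
    linarith
  have h2 : g z1 - g z ≤ ⟪-lamk + ρ • (z1 - X1), z - z1⟫ := by
    apply min_linearize g hg ρ (-lamk) z1 X1 _ z
    intro x
    have := hz x
    have e1 : ⟪lamk, X1 - z1⟫ = ⟪lamk, X1⟫ - ⟪lamk, z1⟫ := inner_sub_right _ _ _
    have e2 : ⟪lamk, X1 - x⟫ = ⟪lamk, X1⟫ - ⟪lamk, x⟫ := inner_sub_right _ _ _
    have e3 : (⟪-lamk, z1⟫ : ℝ) = -⟪lamk, z1⟫ := inner_neg_left _ _
    have e4 : (⟪-lamk, x⟫ : ℝ) = -⟪lamk, x⟫ := inner_neg_left _ _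
    have e5 : ‖z1 - X1‖ = ‖X1 - z1‖ := norm_sub_rev _ _
    have e6 : ‖x - X1‖ = ‖X1 - x‖ := norm_sub_rev _ _
    rw [e3, e4, e5, e6]
    linarith
  have heq : ⟪lamk + ρ • (X1 - zk), X - X1⟫ + ⟪-lamk + ρ • (z1 - X1), z - z1⟫ =
      ⟪lam1, (X - X1) - (z - z1)⟫ + ρ * ⟪X - X1, z1 - zk⟫ := by
    rw [hlam]
    simp only [inner_add_left, inner_sub_left, inner_sub_right, inner_add_right,
      inner_neg_left, real_inner_smul_left, real_inner_smul_right]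
    rw [real_inner_comm X X1, real_inner_comm z1 X, real_inner_comm zk X,
      real_inner_comm z1 X1, real_inner_comm zk X1]
    ring
  linarith
end

section
/- Let E be a finite-dimensional real inner product space, F, g : E → ℝ convex functions, and ρ > 0. Suppose X^{k+1}, z^k, z^{k+1}, λ^k, λ^{k+1} ∈ E satisfy one ADMM step (X^{k+1} globally minimizes x ↦ L_ρ(x, z^k, λ^k); z^{k+1} globally minimizes z ↦ L_ρ(X^{k+1}, z, λ^k); λ^{k+1} = λ^k + ρ(X^{k+1} − z^{k+1})). Then for every X* ∈ E, every z* ∈ E with X* = z*, and every λ* ∈ E: F(X^{k+1}) − F(X*) + g(z^{k+1}) − g(z*) + ⟨λ*, X^{k+1} − z^{k+1}⟩ ≤ (1/(2ρ))(‖λ* − λ^k‖² − ‖λ* − λ^{k+1}‖²) + (ρ/2)(‖X* − z^k‖² − ‖X* − z^{k+1}‖²). -/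
open RealInnerProductSpace

lemma min_quad_subgrad {E : Type*} [NormedAddCommGroup E] [InnerProductSpace ℝ E]
    (f : E → ℝ) (hf : ConvexOn ℝ Set.univ f) (ρ : ℝ) (hρ : 0 < ρ) (a c x0 : E)
    (hmin : ∀ x, f x0 + ⟪a, x0⟫ + ρ / 2 * ‖x0 - c‖ ^ 2 ≤
      f x + ⟪a, x⟫ + ρ / 2 * ‖x - c‖ ^ 2)
    (y : E) : f x0 - f y ≤ ⟪a + ρ • (x0 - c), y - x0⟫ := by
  apply le_of_forall_pos_le_add
  intro ε hε
  set d := y - x0 with hd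
  set t : ℝ := min 1 (ε / (ρ / 2 * ‖d‖ ^ 2 + 1)) with ht
  have hden : (0:ℝ) < ρ / 2 * ‖d‖ ^ 2 + 1 := by positivity
  have ht0 : 0 < t := lt_min one_pos (div_pos hε hden)
  have ht1 : t ≤ 1 := min_le_left _ _
  have htε : ρ / 2 * t * ‖d‖ ^ 2 ≤ ε := by
    have h1 : t ≤ ε / (ρ / 2 * ‖d‖ ^ 2 + 1) := min_le_right _ _
    have h2 : t * (ρ / 2 * ‖d‖ ^ 2 + 1) ≤ ε := by
      rw [← le_div_iff₀ hden] at *; exact h1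
    nlinarith [norm_nonneg d, sq_nonneg ‖d‖, ht0.le]
  -- convexity
  have hconv := hf.2 (Set.mem_univ x0) (Set.mem_univ y) (by linarith : (0:ℝ) ≤ 1 - t)
    ht0.le (by ring)
  have hpt : (1 - t) • x0 + t • y = x0 + t • d := by
    rw [hd]; module
  rw [hpt] at hconv
  have hmin' := hmin (x0 + t • d)
  have hq : ‖x0 + t • d - c‖ ^ 2 =
      ‖x0 - c‖ ^ 2 + 2 * t * ⟪x0 - c, d⟫ + t ^ 2 * ‖d‖ ^ 2 := by
    have : x0 + t • d - c = (x0 - c) + t • d := by abel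
    rw [this, @norm_add_sq_real, real_inner_smul_right, norm_smul, Real.norm_eq_abs,
      mul_pow, sq_abs]
    ring
  have hi : ⟪a, x0 + t • d⟫ = ⟪a, x0⟫ + t * ⟪a, d⟫ := by
    rw [inner_add_right, real_inner_smul_right]
  rw [hq, hi] at hmin'
  simp only [smul_eq_mul] at hconv
  have key : t * (f x0 - f y) ≤ t * ⟪a, d⟫ + ρ * t * ⟪x0 - c, d⟫ + ρ / 2 * t ^ 2 * ‖d‖ ^ 2 := by
    nlinarith [hmin', hconv]
  have hfin : f x0 - f y ≤ ⟪a, d⟫ + ρ * ⟪x0 - c, d⟫ + ρ / 2 * t * ‖d‖ ^ 2 := by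
    have := mul_le_mul_of_nonneg_left key (le_of_lt (inv_pos.mpr ht0))
    rw [← mul_assoc] at this
    nlinarith [key, ht0]
  have : ⟪a + ρ • (x0 - c), d⟫ = ⟪a, d⟫ + ρ * ⟪x0 - c, d⟫ := by
    rw [inner_add_left, real_inner_smul_left]
  linarith

/-- Per-step telescoping bound for ADMM, Eq. (34) in the paper.
Under one ADMM step at `(zk, lamk)` producing `(X1, z1, lam1)`, for every
feasible optimal pair `Xs = zs` and every `lams`:
`F X1 − F Xs + g z1 − g zs + ⟪lams, X1 − z1⟫
  ≤ (1/(2ρ))(‖lams − lamk‖² − ‖lams − lam1‖²)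
    + (ρ/2)(‖Xs − zk‖² − ‖Xs − z1‖²)`. -/
theorem admm_per_step_telescoping_bound
    {E : Type*} [NormedAddCommGroup E] [InnerProductSpace ℝ E]
    [FiniteDimensional ℝ E]
    (F g : E → ℝ) (hF : ConvexOn ℝ Set.univ F) (hg : ConvexOn ℝ Set.univ g)
    (ρ : ℝ) (hρ : 0 < ρ)
    (X1 zk z1 lamk lam1 : E)
    (hX : ∀ x : E,
      F X1 + g zk + ⟪lamk, X1 - zk⟫ + ρ / 2 * ‖X1 - zk‖ ^ 2 ≤
      F x + g zk + ⟪lamk, x - zk⟫ + ρ / 2 * ‖x - zk‖ ^ 2)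
    (hz : ∀ z : E,
      F X1 + g z1 + ⟪lamk, X1 - z1⟫ + ρ / 2 * ‖X1 - z1‖ ^ 2 ≤
      F X1 + g z + ⟪lamk, X1 - z⟫ + ρ / 2 * ‖X1 - z‖ ^ 2)
    (hlam : lam1 = lamk + ρ • (X1 - z1)) :
    ∀ Xs zs lams : E, Xs = zs →
      F X1 - F Xs + g z1 - g zs + ⟪lams, X1 - z1⟫ ≤
        1 / (2 * ρ) * (‖lams - lamk‖ ^ 2 - ‖lams - lam1‖ ^ 2) +
        ρ / 2 * (‖Xs - zk‖ ^ 2 - ‖Xs - z1‖ ^ 2) := by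
  intro Xs zs lams hXz
  subst hXz
  have hA : F X1 - F Xs ≤ ⟪lamk + ρ • (X1 - zk), Xs - X1⟫ := by
    refine min_quad_subgrad F hF ρ hρ lamk zk X1 (fun x => ?_) Xs
    have h := hX x
    simp only [inner_sub_right] at h
    linarith
  have hB : g z1 - g Xs ≤ ⟪-lamk + ρ • (z1 - X1), Xs - z1⟫ := by
    refine min_quad_subgrad g hg ρ hρ (-lamk) X1 z1 (fun z => ?_) Xs
    have h := hz z
    simp only [inner_sub_right] at h
    simp only [inner_neg_left]
    rw [norm_sub_rev z1 X1, norm_sub_rev z X1]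
    linarith
  subst hlam
  have hρ' : ρ ≠ 0 := ne_of_gt hρ
  have hid : 1 / (2 * ρ) * (‖lams - lamk‖ ^ 2 - ‖lams - (lamk + ρ • (X1 - z1))‖ ^ 2) +
      ρ / 2 * (‖Xs - zk‖ ^ 2 - ‖Xs - z1‖ ^ 2) -
      (⟪lamk + ρ • (X1 - zk), Xs - X1⟫ + ⟪-lamk + ρ • (z1 - X1), Xs - z1⟫ +
        ⟪lams, X1 - z1⟫) = ρ / 2 * ‖X1 - zk‖ ^ 2 := by
    simp only [norm_sub_sq_real, norm_add_sq_real, inner_add_left, inner_add_right,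
      inner_sub_left, inner_sub_right, inner_neg_left, real_inner_smul_left,
      real_inner_smul_right, real_inner_self_eq_norm_sq, norm_smul, Real.norm_eq_abs,
      mul_pow, sq_abs, real_inner_comm]
    field_simp
    ring
  nlinarith [sq_nonneg ‖X1 - zk‖, hA, hB, hid]
end

section
/- Let E be a finite-dimensional real inner product space, F, g : E → ℝ convex functions, and ρ > 0. Let (X^k)_{k≥0}, (z^k)_{k≥0}, (λ^k)_{k≥0} in E be sequences such that for every k: X^{k+1} is a global minimizer over E of x ↦ F(x) + g(z^k) + ⟨λ^k, x − z^k⟩ + (ρ/2)‖x − z^k‖²; z^{k+1} is a global minimizer over E of z ↦ F(X^{k+1}) + g(z) + ⟨λ^k, X^{k+1} − z⟩ + (ρ/2)‖X^{k+1} − z‖²; and λ^{k+1} = λ^k + ρ(X^{k+1} − z^{k+1}). Suppose (X*, z*, λ*) is a saddle point of the Lagrangian L(x, z, λ) = F(x) + g(z) + ⟨λ, x − z⟩, i.e., L(X*, z*, λ) ≤ L(X*, z*, λ*) ≤ L(X, z, λ*) for all X, z, λ ∈ E, and X* = z*. Then for every k ≥ 1, with the ergodic averages X̄^k = (1/k)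 Σ_{s=0}^{k−1} X^{s+1} and z̄^k = (1/k) Σ_{s=0}^{k−1} z^{s+1}, one has 0 ≤ L(X̄^k, z̄^k, λ*) − L(X*, z*, λ*) ≤ (1/k) ( (1/(2ρ))‖λ* − λ^0‖² + (ρ/2)‖X* − z^0‖² ); in particular the Lagrangian optimality gap of the ergodic ADMM iterates decays at rate O(1/k). -/
open RealInnerProductSpace Finset

lemma aux_linearize {E : Type*} [NormedAddCommGroup E] [InnerProductSpace ℝ E]
    (ψ : E → ℝ) (hψ : ConvexOn ℝ Set.univ ψ) (ρ : ℝ) (hρ : 0 < ρ) (a xh : E)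
    (hmin : ∀ x, ψ xh + ρ / 2 * ‖xh - a‖ ^ 2 ≤ ψ x + ρ / 2 * ‖x - a‖ ^ 2) :
    ∀ x, ψ xh + ρ * ⟪xh - a, xh⟫ ≤ ψ x + ρ * ⟪xh - a, x⟫ := by
  intro x
  set C : ℝ := ψ x - ψ xh + ρ * ⟪xh - a, x - xh⟫ with hC
  have key : ∀ t : ℝ, 0 < t → t ≤ 1 → 0 ≤ C + ρ * t / 2 * ‖x - xh‖ ^ 2 := by
    intro t ht ht1
    have h1 : xh + t • (x - xh) = (1 - t) • xh + t • x := by module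
    have hconv : ψ ((1 - t) • xh + t • x) ≤ (1 - t) * ψ xh + t * ψ x :=
      hψ.2 (Set.mem_univ xh) (Set.mem_univ x) (by linarith) (le_of_lt ht) (by ring)
    have hn : ‖xh + t • (x - xh) - a‖ ^ 2
        = ‖xh - a‖ ^ 2 + 2 * t * ⟪xh - a, x - xh⟫ + t ^ 2 * ‖x - xh‖ ^ 2 := by
      have h2 : xh + t • (x - xh) - a = (xh - a) + t • (x - xh) := by abel
      rw [h2, norm_add_sq_real, real_inner_smul_right, norm_smul, Real.norm_eq_abs,
        mul_pow, sq_abs]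
      ring
    have hm := hmin (xh + t • (x - xh))
    rw [hn] at hm
    rw [h1] at hm
    have : 0 ≤ t * C + ρ * t ^ 2 / 2 * ‖x - xh‖ ^ 2 := by
      have := hconv
      nlinarith [hm]
    nlinarith [this]
  have hCnn : 0 ≤ C := by
    by_contra h
    push_neg at h
    set M : ℝ := ρ / 2 * ‖x - xh‖ ^ 2 with hM
    have hMnn : 0 ≤ M := by positivity
    set t0 : ℝ := min 1 (-C / (M + 1)) with ht0
    have ht0pos : 0 < t0 := lt_min one_pos (div_pos (by linarith) (by positivity))
    have ht0le : t0 ≤ 1 := min_le_left _ _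
    have h2 := key t0 ht0pos ht0le
    have ht0le2 : t0 ≤ -C / (M + 1) := min_le_right _ _
    have : t0 * (M + 1) ≤ -C := by
      rw [← le_div_iff₀ (by positivity)] ; exact ht0le2
    nlinarith
  have : ρ * ⟪xh - a, x - xh⟫ = ρ * ⟪xh - a, x⟫ - ρ * ⟪xh - a, xh⟫ := by
    rw [inner_sub_right]; ring
  rw [hC, this] at hCnn
  linarith

lemma linconv {E : Type*} [NormedAddCommGroup E] [InnerProductSpace ℝ E] (l : E) :
    ConvexOn ℝ Set.univ (fun w : E => ⟪l, w⟫) := by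
  refine ⟨convex_univ, fun x _ y _ a b _ _ hab => le_of_eq ?_⟩
  simp [inner_add_right, real_inner_smul_right]

lemma key_identity {E : Type*} [NormedAddCommGroup E] [InnerProductSpace ℝ E]
    (ρ : ℝ) (hρ : 0 < ρ) (a b c l xs ls : E) :
    1/(2*ρ)*‖ls - l‖^2 + ρ/2*‖xs - c‖^2
      - (1/(2*ρ)*‖ls - (l + ρ•(a-b))‖^2 + ρ/2*‖xs - b‖^2)
      - (⟪ls, a-b⟫ + ⟪l + ρ•(a-b), b⟫ - ⟪l + ρ•(a-b), xs⟫ + ⟪l, xs⟫ - ⟪l, a⟫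
          + ρ*⟪a-c, xs⟫ - ρ*⟪a-c, a⟫)
      = ρ/2 * ‖a - c‖^2 := by
  have h1 : ‖ls - (l + ρ•(a-b))‖^2
      = ‖ls - l‖^2 - 2*ρ*⟪ls - l, a - b⟫ + ρ^2*‖a-b‖^2 := by
    have h2 : ls - (l + ρ•(a-b)) = (ls - l) - ρ•(a-b) := by abel
    rw [h2, norm_sub_sq_real, real_inner_smul_right, norm_smul, Real.norm_eq_abs,
      mul_pow, sq_abs]
    ring
  rw [h1]
  have hρ' : ρ ≠ 0 := ne_of_gt hρ
  field_simp
  simp only [norm_sub_sq_real, inner_sub_left, inner_sub_right, inner_add_left,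
    inner_add_right, real_inner_smul_left, real_inner_smul_right,
    real_inner_self_eq_norm_sq]
  ring_nf
  simp only [real_inner_comm c xs, real_inner_comm b xs, real_inner_comm a xs,
    real_inner_comm c a, real_inner_comm b a, real_inner_comm l ls,
    real_inner_comm l a, real_inner_comm l b, real_inner_comm ls a,
    real_inner_comm ls b, real_inner_comm l xs, real_inner_comm ls xs]
  ring

/-- Theorem 2 of the paper: `O(1/k)` ergodic convergence of ADMM.
Let `(X k, z k, lam k)` be ADMM iterates for convex `F, g` with penalty `ρ > 0`,
and let `(Xs, zs, lams)` be a saddle point of the Lagrangian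
`L(x, z, lam) = F x + g z + ⟪lam, x − z⟫` with `Xs = zs`.  Then for every
`k ≥ 1` the ergodic averages `X̄ᵏ = (1/k) ∑_{s<k} X^{s+1}`,
`z̄ᵏ = (1/k) ∑_{s<k} z^{s+1}` satisfy
`0 ≤ L(X̄ᵏ, z̄ᵏ, lams) − L(Xs, zs, lams)
   ≤ (1/k)((1/(2ρ))‖lams − lam⁰‖² + (ρ/2)‖Xs − z⁰‖²)`. -/
theorem admm_ergodic_O_one_over_k
    {E : Type*} [NormedAddCommGroup E] [InnerProductSpace ℝ E]
    [FiniteDimensional ℝ E]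
    (F g : E → ℝ) (hF : ConvexOn ℝ Set.univ F) (hg : ConvexOn ℝ Set.univ g)
    (ρ : ℝ) (hρ : 0 < ρ)
    (X z lam : ℕ → E)
    (hX : ∀ k : ℕ, ∀ x : E,
      F (X (k + 1)) + g (z k) + ⟪lam k, X (k + 1) - z k⟫ +
          ρ / 2 * ‖X (k + 1) - z k‖ ^ 2 ≤
        F x + g (z k) + ⟪lam k, x - z k⟫ + ρ / 2 * ‖x - z k‖ ^ 2)
    (hz : ∀ k : ℕ, ∀ w : E,
      F (X (k + 1)) + g (z (k + 1)) + ⟪lam k, X (k + 1) - z (k + 1)⟫ +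
          ρ / 2 * ‖X (k + 1) - z (k + 1)‖ ^ 2 ≤
        F (X (k + 1)) + g w + ⟪lam k, X (k + 1) - w⟫ +
          ρ / 2 * ‖X (k + 1) - w‖ ^ 2)
    (hlam : ∀ k : ℕ, lam (k + 1) = lam k + ρ • (X (k + 1) - z (k + 1)))
    (L : E → E → E → ℝ)
    (hL : ∀ x w l : E, L x w l = F x + g w + ⟪l, x - w⟫)
    (Xs zs lams : E)
    (hsaddle : ∀ x w l : E, L Xs zs l ≤ L Xs zs lams ∧ L Xs zs lams ≤ L x w lams)
    (hfeas : Xs = zs) :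
    ∀ k : ℕ, 1 ≤ k →
      0 ≤ L ((k : ℝ)⁻¹ • ∑ s ∈ Finset.range k, X (s + 1))
            ((k : ℝ)⁻¹ • ∑ s ∈ Finset.range k, z (s + 1)) lams -
          L Xs zs lams ∧
      L ((k : ℝ)⁻¹ • ∑ s ∈ Finset.range k, X (s + 1))
          ((k : ℝ)⁻¹ • ∑ s ∈ Finset.range k, z (s + 1)) lams -
        L Xs zs lams ≤
        (1 / (k : ℝ)) *
          (1 / (2 * ρ) * ‖lams - lam 0‖ ^ 2 + ρ / 2 * ‖Xs - z 0‖ ^ 2) := by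
  -- step B : x-update linearized
  have hB : ∀ k : ℕ, ∀ x : E,
      F (X (k+1)) + ⟪lam k, X (k+1)⟫ + ρ * ⟪X (k+1) - z k, X (k+1)⟫ ≤
        F x + ⟪lam k, x⟫ + ρ * ⟪X (k+1) - z k, x⟫ := by
    intro k
    have hψ : ConvexOn ℝ Set.univ (fun x : E => F x + ⟪lam k, x⟫) :=
      hF.add (linconv (lam k))
    have hmin : ∀ x : E, (F (X (k+1)) + ⟪lam k, X (k+1)⟫) + ρ/2 * ‖X (k+1) - z k‖^2
        ≤ (F x + ⟪lam k, x⟫) + ρ/2 * ‖x - z k‖^2 := by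
      intro x
      have h := hX k x
      have e1 : ⟪lam k, X (k+1) - z k⟫ = ⟪lam k, X (k+1)⟫ - ⟪lam k, z k⟫ :=
        inner_sub_right _ _ _
      have e2 : ⟪lam k, x - z k⟫ = ⟪lam k, x⟫ - ⟪lam k, z k⟫ := inner_sub_right _ _ _
      rw [e1, e2] at h
      linarith
    exact aux_linearize _ hψ ρ hρ (z k) (X (k+1)) hmin
  -- step A : z-update linearized
  have hA : ∀ k : ℕ, ∀ w : E,
      g (z (k+1)) - ⟪lam (k+1), z (k+1)⟫ ≤ g w - ⟪lam (k+1), w⟫ := by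
    intro k
    have hψ : ConvexOn ℝ Set.univ (fun w : E => g w + ⟪-(lam k), w⟫) :=
      hg.add (linconv (-(lam k)))
    have hmin : ∀ w : E, (g (z (k+1)) + ⟪-(lam k), z (k+1)⟫)
          + ρ/2 * ‖z (k+1) - X (k+1)‖^2
        ≤ (g w + ⟪-(lam k), w⟫) + ρ/2 * ‖w - X (k+1)‖^2 := by
      intro w
      have h := hz k w
      have e1 : ⟪lam k, X (k+1) - z (k+1)⟫ = ⟪lam k, X (k+1)⟫ - ⟪lam k, z (k+1)⟫ :=
        inner_sub_right _ _ _
      have e2 : ⟪lam k, X (k+1) - w⟫ = ⟪lam k, X (k+1)⟫ - ⟪lam k, w⟫ :=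
        inner_sub_right _ _ _
      have e3 : ‖X (k+1) - z (k+1)‖ = ‖z (k+1) - X (k+1)‖ := norm_sub_rev _ _
      have e4 : ‖X (k+1) - w‖ = ‖w - X (k+1)‖ := norm_sub_rev _ _
      have e5 : ⟪-(lam k), z (k+1)⟫ = -⟪lam k, z (k+1)⟫ := inner_neg_left _ _
      have e6 : ⟪-(lam k), w⟫ = -⟪lam k, w⟫ := inner_neg_left _ _
      rw [e1, e2, e3, e4] at h
      rw [e5, e6]
      linarith
    intro w
    have h := aux_linearize _ hψ ρ hρ (X (k+1)) (z (k+1)) hmin w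
    have key : ∀ u : E, ⟪-(lam k), u⟫ + ρ * ⟪z (k+1) - X (k+1), u⟫
        = -⟪lam (k+1), u⟫ := by
      intro u
      have e : -(lam (k+1)) = -(lam k) + ρ • (z (k+1) - X (k+1)) := by
        rw [hlam k]; module
      have := congrArg (fun v => ⟪v, u⟫) e
      simp only [inner_neg_left, inner_add_left, real_inner_smul_left] at this
      rw [inner_neg_left]
      linarith
    have k1 := key (z (k+1))
    have k2 := key w
    linarith
  -- per-step estimate
  have hstep : ∀ s : ℕ,
      L (X (s+1)) (z (s+1)) lams - L Xs zs lams ≤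
        (1/(2*ρ)*‖lams - lam s‖^2 + ρ/2*‖Xs - z s‖^2)
        - (1/(2*ρ)*‖lams - lam (s+1)‖^2 + ρ/2*‖Xs - z (s+1)‖^2) := by
    intro s
    rw [hL, hL]
    have hzero : ⟪lams, Xs - zs⟫ = (0:ℝ) := by
      rw [hfeas, sub_self, inner_zero_right]
    have hgzs : g zs = g Xs := by rw [hfeas]
    have hA' := hA s Xs
    have hB' := hB s Xs
    rw [hlam s] at hA' ⊢
    have hid := key_identity ρ hρ (X (s+1)) (z (s+1)) (z s) (lam s) Xs lams
    have hnn : (0:ℝ) ≤ ρ/2 * ‖X (s+1) - z s‖^2 := by positivity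
    have hinner : ⟪lams, X (s+1) - z (s+1)⟫ = ⟪lams, X (s+1) - z (s+1)⟫ := rfl
    rw [hzero, hgzs]
    linarith [hid, hA', hB', hnn]
  intro k hk
  have hkpos : (0:ℝ) < (k:ℝ) := by exact_mod_cast Nat.pos_of_ne_zero (by omega)
  have hkne : (k:ℝ) ≠ 0 := ne_of_gt hkpos
  -- lower bound
  constructor
  · have := (hsaddle ((k : ℝ)⁻¹ • ∑ s ∈ Finset.range k, X (s + 1))
      ((k : ℝ)⁻¹ • ∑ s ∈ Finset.range k, z (s + 1)) lams).2
    linarith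
  -- upper bound
  · -- Jensen
    have hw0 : ∀ i ∈ Finset.range k, (0:ℝ) ≤ (k:ℝ)⁻¹ := fun i _ => by positivity
    have hw1 : ∑ _i ∈ Finset.range k, (k:ℝ)⁻¹ = 1 := by
      rw [Finset.sum_const, Finset.card_range, nsmul_eq_mul, mul_inv_cancel₀ hkne]
    have hFb : F ((k:ℝ)⁻¹ • ∑ s ∈ Finset.range k, X (s+1))
        ≤ ∑ s ∈ Finset.range k, (k:ℝ)⁻¹ * F (X (s+1)) := by
      rw [Finset.smul_sum]
      have := hF.map_sum_le hw0 hw1 (fun i _ => Set.mem_univ (X (i+1)))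
      simpa using this
    have hgb : g ((k:ℝ)⁻¹ • ∑ s ∈ Finset.range k, z (s+1))
        ≤ ∑ s ∈ Finset.range k, (k:ℝ)⁻¹ * g (z (s+1)) := by
      rw [Finset.smul_sum]
      have := hg.map_sum_le hw0 hw1 (fun i _ => Set.mem_univ (z (i+1)))
      simpa using this
    have hinner : ⟪lams, (k:ℝ)⁻¹ • ∑ s ∈ Finset.range k, X (s+1)
          - (k:ℝ)⁻¹ • ∑ s ∈ Finset.range k, z (s+1)⟫
        = ∑ s ∈ Finset.range k, (k:ℝ)⁻¹ * ⟪lams, X (s+1) - z (s+1)⟫ := by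
      rw [← smul_sub, ← Finset.sum_sub_distrib, real_inner_smul_right, inner_sum,
        Finset.mul_sum]
    have hJ : L ((k:ℝ)⁻¹ • ∑ s ∈ Finset.range k, X (s+1))
        ((k:ℝ)⁻¹ • ∑ s ∈ Finset.range k, z (s+1)) lams
        ≤ ∑ s ∈ Finset.range k, (k:ℝ)⁻¹ * L (X (s+1)) (z (s+1)) lams := by
      simp only [hL]
      have : ∑ s ∈ Finset.range k,
          (k:ℝ)⁻¹ * (F (X (s+1)) + g (z (s+1)) + ⟪lams, X (s+1) - z (s+1)⟫)
          = (∑ s ∈ Finset.range k, (k:ℝ)⁻¹ * F (X (s+1)))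
            + (∑ s ∈ Finset.range k, (k:ℝ)⁻¹ * g (z (s+1)))
            + ∑ s ∈ Finset.range k, (k:ℝ)⁻¹ * ⟪lams, X (s+1) - z (s+1)⟫ := by
        rw [← Finset.sum_add_distrib, ← Finset.sum_add_distrib]
        exact Finset.sum_congr rfl (fun i _ => by ring)
      rw [this]
      linarith [hFb, hgb, le_of_eq hinner]
    -- telescoping
    have htel : ∑ s ∈ Finset.range k,
        ((1/(2*ρ)*‖lams - lam s‖^2 + ρ/2*‖Xs - z s‖^2)
          - (1/(2*ρ)*‖lams - lam (s+1)‖^2 + ρ/2*‖Xs - z (s+1)‖^2))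
        = (1/(2*ρ)*‖lams - lam 0‖^2 + ρ/2*‖Xs - z 0‖^2)
          - (1/(2*ρ)*‖lams - lam k‖^2 + ρ/2*‖Xs - z k‖^2) :=
      Finset.sum_range_sub' (fun j => 1/(2*ρ)*‖lams - lam j‖^2 + ρ/2*‖Xs - z j‖^2) k
    have hDk : (0:ℝ) ≤ 1/(2*ρ)*‖lams - lam k‖^2 + ρ/2*‖Xs - z k‖^2 := by positivity
    have hsum1 : ∑ s ∈ Finset.range k,
        (L (X (s+1)) (z (s+1)) lams - L Xs zs lams)
        ≤ 1/(2*ρ)*‖lams - lam 0‖^2 + ρ/2*‖Xs - z 0‖^2 := by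
      calc ∑ s ∈ Finset.range k, (L (X (s+1)) (z (s+1)) lams - L Xs zs lams)
          ≤ ∑ s ∈ Finset.range k,
            ((1/(2*ρ)*‖lams - lam s‖^2 + ρ/2*‖Xs - z s‖^2)
              - (1/(2*ρ)*‖lams - lam (s+1)‖^2 + ρ/2*‖Xs - z (s+1)‖^2)) :=
            Finset.sum_le_sum (fun s _ => hstep s)
        _ = _ := htel
        _ ≤ _ := by linarith
    have hsum2 : ∑ s ∈ Finset.range k, L (X (s+1)) (z (s+1)) lams
        ≤ (1/(2*ρ)*‖lams - lam 0‖^2 + ρ/2*‖Xs - z 0‖^2) + (k:ℝ) * L Xs zs lams := by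
      rw [Finset.sum_sub_distrib, Finset.sum_const, Finset.card_range,
        nsmul_eq_mul] at hsum1
      linarith
    have hmul : (k:ℝ)⁻¹ * (∑ s ∈ Finset.range k, L (X (s+1)) (z (s+1)) lams)
        ≤ (k:ℝ)⁻¹ * ((1/(2*ρ)*‖lams - lam 0‖^2 + ρ/2*‖Xs - z 0‖^2)
            + (k:ℝ) * L Xs zs lams) :=
      mul_le_mul_of_nonneg_left hsum2 (by positivity)
    have hexp : (k:ℝ)⁻¹ * ((1/(2*ρ)*‖lams - lam 0‖^2 + ρ/2*‖Xs - z 0‖^2)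
          + (k:ℝ) * L Xs zs lams)
        = (1/(k:ℝ)) * (1/(2*ρ)*‖lams - lam 0‖^2 + ρ/2*‖Xs - z 0‖^2)
          + L Xs zs lams := by
      field_simp
    have hsum3 : ∑ s ∈ Finset.range k, (k:ℝ)⁻¹ * L (X (s+1)) (z (s+1)) lams
        = (k:ℝ)⁻¹ * ∑ s ∈ Finset.range k, L (X (s+1)) (z (s+1)) lams := by
      rw [Finset.mul_sum]
    rw [hsum3] at hJ
    linarith
end

section
/- Let E be a finite-dimensional real inner product space, F : E → ℝ differentiable with gradient ∇F, and suppose ∇F is μ-strongly monotone for some μ > 0, i.e., ⟨∇F(a) − ∇F(b), a − b⟩ ≥ μ‖a − b‖² for all a, b ∈ E. Let ρ > 0 and let X^k, X^{k+1}, z^k, λ^k, X*, λ* ∈ E satisfy the optimality conditions ∇F(X*) + λ* = 0 and ∇F(X^{k+1}) + λ^k + ρ(X^{k+1} − z^k) = 0. Then μ‖X^{k+1} − X*‖² ≤ (ρ/2)(‖X^k − X*‖² − ‖X^{k+1} − X*‖²) − (ρ/2)‖X^{k+1} − X^k‖² − ⟨X^{k+1} − X*, (λ^k − λ*) + ρ(X^k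 − z^k)⟩. -/
open RealInnerProductSpace

/-- Strong-monotonicity bound, Eq. (47) in the paper.
If `∇F` is `μ`-strongly monotone, `∇F Xs + lams = 0` and
`∇F X1 + lamk + ρ (X1 − zk) = 0`, then
`μ‖X1 − Xs‖² ≤ (ρ/2)(‖Xk − Xs‖² − ‖X1 − Xs‖²) − (ρ/2)‖X1 − Xk‖²
  − ⟪X1 − Xs, (lamk − lams) + ρ(Xk − zk)⟫`. -/
theorem admm_strong_monotonicity_bound
    {E : Type*} [NormedAddCommGroup E] [InnerProductSpace ℝ E]
    [FiniteDimensional ℝ E]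
    (F : E → ℝ) (gradF : E → E) (hgrad : ∀ x : E, HasGradientAt F (gradF x) x)
    (μ : ℝ) (hμ : 0 < μ)
    (hmono : ∀ a b : E, μ * ‖a - b‖ ^ 2 ≤ ⟪gradF a - gradF b, a - b⟫)
    (ρ : ℝ) (hρ : 0 < ρ)
    (Xk X1 zk lamk Xs lams : E)
    (hopt : gradF Xs + lams = 0)
    (hstep : gradF X1 + lamk + ρ • (X1 - zk) = 0) :
    μ * ‖X1 - Xs‖ ^ 2 ≤
      ρ / 2 * (‖Xk - Xs‖ ^ 2 - ‖X1 - Xs‖ ^ 2) - ρ / 2 * ‖X1 - Xk‖ ^ 2 -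
        ⟪X1 - Xs, (lamk - lams) + ρ • (Xk - zk)⟫ := by
  have h1 : gradF X1 = -lamk - ρ • (X1 - zk) := by
    have := hstep; abel_nf at this ⊢; linear_combination (norm := abel) this
  have h2 : gradF Xs = -lams := by
    have := hopt; linear_combination (norm := abel) this
  have key := hmono X1 Xs
  rw [h1, h2] at key
  refine key.trans (le_of_eq ?_)
  have e1 : ‖Xk - Xs‖ ^ 2 = ⟪Xk - Xs, Xk - Xs⟫ := (real_inner_self_eq_norm_sq _).symm
  have e2 : ‖X1 - Xs‖ ^ 2 = ⟪X1 - Xs, X1 - Xs⟫ := (real_inner_self_eq_norm_sq _).symm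
  have e3 : ‖X1 - Xk‖ ^ 2 = ⟪X1 - Xk, X1 - Xk⟫ := (real_inner_self_eq_norm_sq _).symm
  rw [e1, e2, e3]
  simp only [inner_sub_left, inner_sub_right, inner_add_left, inner_add_right,
    real_inner_smul_left, real_inner_smul_right, inner_neg_left, inner_neg_right]
  rw [real_inner_comm Xs X1, real_inner_comm Xs Xk, real_inner_comm Xk X1,
    real_inner_comm zk X1, real_inner_comm zk Xs, real_inner_comm lamk X1,
    real_inner_comm lamk Xs, real_inner_comm lams X1, real_inner_comm lams Xs]
  ring
end

section
/- Let E be a finite-dimensional real inner product space, F : E → ℝ differentiable with gradient ∇F that is μ-strongly monotone for some μ > 0 (⟨∇F(a) − ∇F(b), a − b⟩ ≥ μ‖a − b‖² for all a, b ∈ E). Let ρ > 0 and let X^k, X^{k+1}, z^k, λ^k, X*, z*, λ* ∈ E satisfy ∇F(X*) + λ* = 0, ∇F(X^{k+1}) + λ^k + ρ(X^{k+1} − z^k) = 0, and X* = z*. Then for every μ₁ with 0 < μ₁ < 2 + 2μ/ρ: ‖X^{k+1} − X*‖ ≤ sqrt( ρ / ( μ₁ ( (2 − μ₁)ρ + 2μ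 ) ) ) · ‖(1/ρ)(λ^k − λ*) − (z^k − z*)‖, and consequently ‖X^{k+1} − X*‖ ≤ sqrt( ρ / ( μ₁ ( (2 − μ₁)ρ + 2μ ) ) ) · ( (1/ρ)‖λ^k − λ*‖ + ‖z^k − z*‖ ). -/
open RealInnerProductSpace

/-- Eq. (52) of the paper: the per-step R-linear bound.
Under `μ`-strong monotonicity of `∇F`, the ADMM optimality conditions
`∇F Xs + lams = 0`, `∇F X1 + lamk + ρ(X1 − zk) = 0` and feasibility `Xs = zs`,
for every `μ₁` with `0 < μ₁ < 2 + 2μ/ρ`: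
`‖X1 − Xs‖ ≤ √(ρ / (μ₁((2 − μ₁)ρ + 2μ))) ‖(1/ρ)(lamk − lams) − (zk − zs)‖`
and consequently
`‖X1 − Xs‖ ≤ √(ρ / (μ₁((2 − μ₁)ρ + 2μ))) ((1/ρ)‖lamk − lams‖ + ‖zk − zs‖)`. -/
theorem admm_per_step_Rlinear_bound
    {E : Type*} [NormedAddCommGroup E] [InnerProductSpace ℝ E]
    [FiniteDimensional ℝ E]
    (F : E → ℝ) (gradF : E → E) (hgrad : ∀ x : E, HasGradientAt F (gradF x) x)
    (μ : ℝ) (hμ : 0 < μ)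
    (hmono : ∀ a b : E, μ * ‖a - b‖ ^ 2 ≤ ⟪gradF a - gradF b, a - b⟫)
    (ρ : ℝ) (hρ : 0 < ρ)
    (Xk X1 zk lamk Xs zs lams : E)
    (hopt : gradF Xs + lams = 0)
    (hstep : gradF X1 + lamk + ρ • (X1 - zk) = 0)
    (hfeas : Xs = zs)
    (μ₁ : ℝ) (hμ₁ : 0 < μ₁) (hμ₁' : μ₁ < 2 + 2 * μ / ρ) :
    ‖X1 - Xs‖ ≤
      Real.sqrt (ρ / (μ₁ * ((2 - μ₁) * ρ + 2 * μ))) *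
        ‖(1 / ρ) • (lamk - lams) - (zk - zs)‖ ∧
    ‖X1 - Xs‖ ≤
      Real.sqrt (ρ / (μ₁ * ((2 - μ₁) * ρ + 2 * μ))) *
        ((1 / ρ) * ‖lamk - lams‖ + ‖zk - zs‖) := by

  have hρ' : ρ ≠ 0 := ne_of_gt hρ
  set u := X1 - Xs with hu
  set v := (1 / ρ) • (lamk - lams) - (zk - zs) with hv
  have hkey : gradF X1 - gradF Xs = -(ρ • v) - ρ • u := by
    have h1 : gradF X1 = -lamk - ρ • (X1 - zk) := by
      rw [add_assoc] at hstep
      have := eq_neg_of_add_eq_zero_left hstep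
      rw [this]; abel
    have h2 : gradF Xs = -lams := eq_neg_of_add_eq_zero_left hopt
    rw [h1, h2, hv, hu, ← hfeas]
    match_scalars <;> field_simp <;> ring
  have hip : ⟪gradF X1 - gradF Xs, u⟫ = -(ρ * ⟪v, u⟫) - ρ * ‖u‖ ^ 2 := by
    rw [hkey, inner_sub_left, inner_neg_left, real_inner_smul_left,
      real_inner_smul_left, real_inner_self_eq_norm_sq]
  have hm : μ * ‖u‖ ^ 2 ≤ -(ρ * ⟪v, u⟫) - ρ * ‖u‖ ^ 2 := by
    have := hmono X1 Xs
    rw [← hu] at this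
    linarith [hip ▸ this]
  have hcs : -⟪v, u⟫ ≤ ‖v‖ * ‖u‖ := by
    have h1 := abs_real_inner_le_norm v u
    have h2 := neg_abs_le (⟪v, u⟫)
    linarith
  have hd : 0 < (2 - μ₁) * ρ + 2 * μ := by
    have h2 : μ₁ * ρ < (2 + 2 * μ / ρ) * ρ := mul_lt_mul_of_pos_right hμ₁' hρ
    have h3 : (2 + 2 * μ / ρ) * ρ = 2 * ρ + 2 * μ := by field_simp
    nlinarith
  have hdd : 0 < μ₁ * ((2 - μ₁) * ρ + 2 * μ) := mul_pos hμ₁ hd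
  have hq : ‖u‖ ^ 2 * (μ₁ * ((2 - μ₁) * ρ + 2 * μ)) ≤ ρ * ‖v‖ ^ 2 := by
    have key : (μ + ρ) * ‖u‖ ^ 2 ≤ ρ * (‖v‖ * ‖u‖) := by
      have := mul_le_mul_of_nonneg_left hcs hρ.le
      nlinarith
    nlinarith [sq_nonneg (μ₁ * ‖u‖ - ‖v‖), mul_le_mul_of_nonneg_left key hμ₁.le,
      mul_nonneg hρ.le (sq_nonneg (μ₁ * ‖u‖ - ‖v‖))]
  have hsq : ‖u‖ ^ 2 ≤ (ρ / (μ₁ * ((2 - μ₁) * ρ + 2 * μ))) * ‖v‖ ^ 2 := by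
    rw [div_mul_eq_mul_div, le_div_iff₀ hdd]
    linarith [hq]
  have hmain : ‖u‖ ≤ Real.sqrt (ρ / (μ₁ * ((2 - μ₁) * ρ + 2 * μ))) * ‖v‖ := by
    have h1 : ‖u‖ = Real.sqrt (‖u‖ ^ 2) := (Real.sqrt_sq (norm_nonneg u)).symm
    rw [h1]
    calc Real.sqrt (‖u‖ ^ 2)
        ≤ Real.sqrt ((ρ / (μ₁ * ((2 - μ₁) * ρ + 2 * μ))) * ‖v‖ ^ 2) :=
          Real.sqrt_le_sqrt hsq
      _ = Real.sqrt (ρ / (μ₁ * ((2 - μ₁) * ρ + 2 * μ))) * ‖v‖ := by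
          rw [Real.sqrt_mul (le_of_lt (div_pos hρ hdd)), Real.sqrt_sq (norm_nonneg v)]
  refine ⟨hmain, ?_⟩
  have hvle : ‖v‖ ≤ (1 / ρ) * ‖lamk - lams‖ + ‖zk - zs‖ := by
    calc ‖v‖ ≤ ‖(1 / ρ) • (lamk - lams)‖ + ‖zk - zs‖ := norm_sub_le _ _
      _ = (1 / ρ) * ‖lamk - lams‖ + ‖zk - zs‖ := by
          rw [norm_smul, Real.norm_eq_abs, abs_of_pos (by positivity)]
  exact hmain.trans (mul_le_mul_of_nonneg_left hvle (Real.sqrt_nonneg _))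
end
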